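/- arXiv:0911.1828 — 2 statements merged into one kernel-verified Lean document; each statement's English description precedes it below -/
import Mathlib

section
/- Let Γ be a distance-regular graph and C a completely regular code with covering radius ρ and Spec*(C) = {θ_{i_1}, …, θ_{i_ρ}}. Let λ_j and τ_j (0 ≤ j ≤ ρ) be the coefficients with u(θ_{i_1}) ∘ u(θ_{i_1}) = Σ_j λ_j u(θ_{i_j}) and u(θ_{i_1}) ∘ u(θ_{i_1}) ∘ u(θ_{i_1}) = Σ_j τ_j u(θ_{i_j}) (where i_0 = 0). If λ_j ≠ 0 then q_{i_1, i_1}^{i_j} ≠ 0, and if τ_j ≠ 0 then there exists an index i_ℓ such that q_{i_1, i_1}^{i_ℓ} ≠ 0 and q_{i_ℓ, i_1}^{i_j} ≠ 0. -/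
open Finset Matrix

variable {V : Type*}

/-- `G` is a distance-regular graph with valency `k`, diameter `D`,
and intersection numbers `b i`, `c i`. -/
def IsDRG [Fintype V] (G : SimpleGraph V) [DecidableRel G.Adj]
    (k D : ℕ) (b c : ℕ → ℕ) : Prop :=
  G.Connected ∧ (∀ v, G.degree v = k) ∧
    (∀ x y : V, G.dist x y ≤ D) ∧ (∃ x y : V, G.dist x y = D) ∧
    ∀ i ≤ D, ∀ x y : V, G.dist x y = i →
      ((Finset.univ.filter fun z => G.Adj y z ∧ G.dist x z = i - 1).card = c i ∧
       (Finset.univ.filter fun z => G.Adj y z ∧ G.dist x z = i + 1).card = b i)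

/-- the distance from a vertex `v` to the code `C` -/
noncomputable def codeDist (G : SimpleGraph V) (C : Finset V) (v : V) : ℕ :=
  sInf {n | ∃ y ∈ C, G.dist v y = n}

/-- the characteristic vector of a code -/
def charVec [DecidableEq V] (C : Finset V) : V → ℂ :=
  fun v => if v ∈ C then 1 else 0

/-- the characteristic vector of the `i`-th cell `C_i` of the distance partition -/
noncomputable def cellVec (G : SimpleGraph V) (C : Finset V) (i : ℕ) : V → ℂ :=
  fun v => if codeDist G C v = i then 1 else 0

/-- the `i`-th cell `C_i` of the distance partition, as a finset -/
noncomputable def cellFinset [Fintype V] (G : SimpleGraph V) (C : Finset V) (i : ℕ) : Finset V :=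
  Finset.univ.filter fun v => codeDist G C v = i

/-- the number of neighbours of `v` lying in the `j`-th cell `C_j` -/
noncomputable def nbrsInCell [Fintype V] (G : SimpleGraph V) [DecidableRel G.Adj]
    (C : Finset V) (j : ℕ) (v : V) : ℕ :=
  (Finset.univ.filter fun z => G.Adj v z ∧ codeDist G C z = j).card

/-- `C` is a completely regular code with covering radius `ρ` and
intersection numbers `γ i, α i, β i`. -/
def IsCRC [Fintype V] (G : SimpleGraph V) [DecidableRel G.Adj]
    (C : Finset V) (ρ : ℕ) (γ α β : ℕ → ℕ) : Prop :=
  C.Nonempty ∧ (∀ v, codeDist G C v ≤ ρ) ∧ (∃ v, codeDist G C v = ρ) ∧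
    (∀ i, 1 ≤ i → i ≤ ρ → ∀ v, codeDist G C v = i → nbrsInCell G C (i - 1) v = γ i) ∧
    (∀ i ≤ ρ, ∀ v, codeDist G C v = i → nbrsInCell G C i v = α i) ∧
    (∀ i ≤ ρ, ∀ v, codeDist G C v = i → nbrsInCell G C (i + 1) v = β i)

/-- the outer distribution module `𝔸x` of the code `C`, where `𝔸` is the
Bose-Mesner algebra (the algebra generated by the adjacency matrix) -/
noncomputable def outerModule [Fintype V] [DecidableEq V] (G : SimpleGraph V)
    [DecidableRel G.Adj] (C : Finset V) : Submodule ℂ (V → ℂ) :=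
  Submodule.span ℂ {w | ∃ M ∈ Algebra.adjoin ℂ {G.adjMatrix ℂ}, w = M *ᵥ charVec C}

/-- the tridiagonal quotient matrix `U` of a completely regular code -/
def quotientMatrix (F : Type*) [Semiring F] (γ α β : ℕ → ℕ) (ρ : ℕ) :
    Matrix (Fin (ρ + 1)) (Fin (ρ + 1)) F :=
  Matrix.of fun i j =>
    if (i : ℕ) = (j : ℕ) + 1 then (γ (i : ℕ) : F)
    else if (i : ℕ) = (j : ℕ) then (α (i : ℕ) : F)
    else if (j : ℕ) = (i : ℕ) + 1 then (β (i : ℕ) : F)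
    else 0

/-- `θ` lists the distinct eigenvalues of `A` and `E j` is the orthogonal
projection onto the eigenspace of `θ j` (the primitive idempotents). -/
def PrimIdem [Fintype V] [DecidableEq V] (A : Matrix V V ℂ) (D : ℕ)
    (θ : Fin (D + 1) → ℝ) (E : Fin (D + 1) → Matrix V V ℂ) : Prop :=
  Function.Injective θ ∧ (∀ j, E j * E j = E j) ∧ (∀ j, (E j)ᴴ = E j) ∧
    (∀ j, A * E j = (θ j : ℂ) • E j) ∧ (∑ j, E j = 1) ∧ (∀ j, E j ≠ 0)

/-- `q` are the Krein parameters of the primitive idempotents `E`. -/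
def KreinRel [Fintype V] (D : ℕ) (E : Fin (D + 1) → Matrix V V ℂ)
    (q : Fin (D + 1) → Fin (D + 1) → Fin (D + 1) → ℝ) : Prop :=
  ∀ i j, Matrix.hadamard (E i) (E j) = (Fintype.card V : ℂ)⁻¹ • ∑ l, (q i j l : ℂ) • E l

/-- the Krein parameters satisfy the `Q`-polynomial condition with respect to the
given ordering of the primitive idempotents -/
def QPolyKrein (D : ℕ) (q : Fin (D + 1) → Fin (D + 1) → Fin (D + 1) → ℝ) : Prop :=
  ∀ i j l : Fin (D + 1),
    (¬(((i : ℤ) - (j : ℤ)).natAbs ≤ (l : ℕ) ∧ (l : ℕ) ≤ (i : ℕ) + (j : ℕ)) → q i j l = 0) ∧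
    (((l : ℕ) = ((i : ℤ) - (j : ℤ)).natAbs ∨ (l : ℕ) = (i : ℕ) + (j : ℕ)) → q i j l ≠ 0)

/-- a matrix is irreducible tridiagonal if all entries at distance more than one from
the diagonal vanish and all sub- and super-diagonal entries are nonzero -/
def IrredTridiag {n : ℕ} {F : Type*} [Zero F] (M : Matrix (Fin n) (Fin n) F) : Prop :=
  (∀ i j : Fin n, 1 < (((i : ℕ) : ℤ) - ((j : ℕ) : ℤ)).natAbs → M i j = 0) ∧
  (∀ i j : Fin n, (((i : ℕ) : ℤ) - ((j : ℕ) : ℤ)).natAbs = 1 → M i j ≠ 0)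

/-- `C` is a Leonard completely regular code with respect to the (nontrivial)
eigenvalue `θ t`: for some ordering `σ` of the basis `ℬ = {E_j x ≠ 0}` of the outer
distribution module, the matrix representing `y ↦ (E t x) ∘ y` is irreducible
tridiagonal. -/
def IsLeonardWrt [Fintype V] [DecidableEq V] (D ρ : ℕ)
    (E : Fin (D + 1) → Matrix V V ℂ) (C : Finset V) (t : Fin (D + 1)) : Prop :=
  E t *ᵥ charVec C ≠ 0 ∧
    ∃ σ : Fin (ρ + 1) → Fin (D + 1), Function.Injective σ ∧
      (∀ j : Fin (D + 1), E j *ᵥ charVec C ≠ 0 ↔ j ∈ Set.range σ) ∧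
      ∃ M : Matrix (Fin (ρ + 1)) (Fin (ρ + 1)) ℂ, IrredTridiag M ∧
        ∀ j, (E t *ᵥ charVec C) * (E (σ j) *ᵥ charVec C) =
          ∑ l, M l j • (E (σ l) *ᵥ charVec C)

/-- `C` is a Leonard completely regular code: it is Leonard with respect to some
nontrivial eigenvalue. -/
def IsLeonard [Fintype V] [DecidableEq V] (D ρ : ℕ)
    (E : Fin (D + 1) → Matrix V V ℂ) (C : Finset V) : Prop :=
  ∃ t : Fin (D + 1), t ≠ 0 ∧ IsLeonardWrt D ρ E C t

/-- `C` is a `Q`-polynomial completely regular code with respect to the eigenvalue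
`θ t`: there is an ordering `Spec C = {θ 0, θ (σ 1), …, θ (σ ρ)}` with `σ 1 = t`
such that the entrywise `p`-th power of `u = E t x` lies in
`V_{σ 0} + ⋯ + V_{σ p}` for all `0 ≤ p ≤ ρ`. -/
def IsQPolyCodeWrt [Fintype V] [DecidableEq V] (G : SimpleGraph V) [DecidableRel G.Adj]
    (D ρ : ℕ) (θ : Fin (D + 1) → ℝ) (E : Fin (D + 1) → Matrix V V ℂ)
    (γ α β : ℕ → ℕ) (C : Finset V) (t : Fin (D + 1)) : Prop :=
  ∃ σ : Fin (ρ + 1) → Fin (D + 1), σ 0 = 0 ∧ Function.Injective σ ∧ σ 1 = t ∧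
    spectrum ℂ (quotientMatrix ℂ γ α β ρ) = Set.range (fun j => (θ (σ j) : ℂ)) ∧
    ∀ p : Fin (ρ + 1), (fun v => (E t *ᵥ charVec C) v ^ (p : ℕ)) ∈
      ⨆ (j : Fin (ρ + 1)) (_ : j ≤ p),
        Module.End.eigenspace (Matrix.mulVecLin (G.adjMatrix ℂ)) ((θ (σ j) : ℂ))

/-- `C` is a `Q`-polynomial completely regular code. -/
def IsQPolyCode [Fintype V] [DecidableEq V] (G : SimpleGraph V) [DecidableRel G.Adj]
    (D ρ : ℕ) (θ : Fin (D + 1) → ℝ) (E : Fin (D + 1) → Matrix V V ℂ)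
    (γ α β : ℕ → ℕ) (C : Finset V) : Prop :=
  ∃ t : Fin (D + 1), IsQPolyCodeWrt G D ρ θ E γ α β C t

/-- a translation graph on an abelian group: adjacency is invariant under translation -/
def IsTranslationGraph {X : Type*} [AddCommGroup X] (G : SimpleGraph X) : Prop :=
  ∀ x y z : X, G.Adj x y → G.Adj (x + z) (y + z)

/-- the coset graph of an additive code `C`: cosets `C'` and `C''` are adjacent if
`Γ` has an edge with one end in `C'` and the other in `C''` -/
def cosetGraph {X : Type*} [AddCommGroup X] (G : SimpleGraph X) (C : AddSubgroup X) :
    SimpleGraph (X ⧸ C) where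
  Adj a b := a ≠ b ∧ ∃ x y : X,
    QuotientAddGroup.mk x = a ∧ QuotientAddGroup.mk y = b ∧ G.Adj x y
  symm := ⟨fun a b ⟨hne, x, y, hx, hy, h⟩ => ⟨hne.symm, y, x, hy, hx, h.symm⟩⟩
  loopless := ⟨fun a ⟨hne, _⟩ => hne rfl⟩

/-- `G` is a `Q`-polynomial distance-regular graph: it is distance-regular and
admits an ordering of its primitive idempotents whose Krein parameters satisfy
the `Q`-polynomial condition -/
def IsQPolyDRG {W : Type*} [Fintype W] [DecidableEq W]
    (G : SimpleGraph W) [DecidableRel G.Adj] : Prop :=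
  ∃ (k D : ℕ) (b c : ℕ → ℕ), IsDRG G k D b c ∧
    ∃ (θ : Fin (D + 1) → ℝ) (E : Fin (D + 1) → Matrix W W ℂ)
      (q : Fin (D + 1) → Fin (D + 1) → Fin (D + 1) → ℝ),
      θ 0 = k ∧ PrimIdem (G.adjMatrix ℂ) D θ E ∧ KreinRel D E q ∧ QPolyKrein D q



set_option linter.unusedSectionVars false
set_option maxHeartbeats 1000000

section HelpersA
variable {W : Type*} (G : SimpleGraph W) (C : Finset W)

lemma cd_exists (hCne : C.Nonempty) (v : W) : ∃ y ∈ C, G.dist v y = codeDist G C v := by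
  obtain ⟨y, hy⟩ := hCne
  have hne : {n | ∃ y ∈ C, G.dist v y = n}.Nonempty := ⟨G.dist v y, y, hy, rfl⟩
  exact Nat.sInf_mem hne

lemma cd_le (v : W) {y : W} (hy : y ∈ C) : codeDist G C v ≤ G.dist v y :=
  Nat.sInf_le ⟨y, hy, rfl⟩

lemma cd_zero_iff (hCne : C.Nonempty) (hconn : G.Connected) (v : W) :
    codeDist G C v = 0 ↔ v ∈ C := by
  constructor
  · intro h
    obtain ⟨y, hy, hd⟩ := cd_exists G C hCne v
    rw [h] at hd
    rwa [(hconn.dist_eq_zero_iff).mp hd]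
  · intro h
    have h1 := cd_le G C v h
    simp only [SimpleGraph.dist_self] at h1
    omega

lemma cd_lip (hCne : C.Nonempty) (hconn : G.Connected) {v z : W} (h : G.Adj v z) :
    codeDist G C z ≤ codeDist G C v + 1 := by
  obtain ⟨y, hy, hd⟩ := cd_exists G C hCne v
  have h1 : G.dist z y ≤ G.dist z v + G.dist v y := hconn.dist_triangle
  have h2 : G.dist z v = 1 := SimpleGraph.dist_eq_one_iff_adj.mpr h.symm
  have h3 := cd_le G C z hy
  omega

lemma cd_descend (hCne : C.Nonempty) (hconn : G.Connected) {v : W} {i : ℕ}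
    (h : codeDist G C v = i + 1) : ∃ z, G.Adj v z ∧ codeDist G C z = i := by
  obtain ⟨y, hy, hd⟩ := cd_exists G C hCne v
  rw [h] at hd
  obtain ⟨p, hp⟩ := (hconn v y).exists_walk_length_eq_dist
  rw [hd] at hp
  cases p with
  | nil => simp at hp
  | cons hadj p' =>
    rename_i z
    refine ⟨z, hadj, le_antisymm ?_ ?_⟩
    · have h4 : G.dist z y ≤ p'.length := SimpleGraph.dist_le p'
      have hl : p'.length = i := by simpa using hp
      have h5 := cd_le G C z hy
      omega
    · have := cd_lip G C hCne hconn hadj.symm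
      omega

lemma cd_cell_nonempty (hCne : C.Nonempty) (hconn : G.Connected) {ρ : ℕ}
    (hρ : ∃ v, codeDist G C v = ρ) : ∀ i ≤ ρ, ∃ v, codeDist G C v = i := by
  have key : ∀ d ≤ ρ, ∃ v, codeDist G C v = ρ - d := by
    intro d
    induction d with
    | zero => intro _; simpa using hρ
    | succ n ih =>
      intro hn
      obtain ⟨w, hw⟩ := ih (by omega)
      have heq : ρ - n = (ρ - (n + 1)) + 1 := by omega
      rw [heq] at hw
      obtain ⟨z, _, hz⟩ := cd_descend G C hCne hconn hw
      exact ⟨z, hz⟩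
  intro i hi
  have := key (ρ - i) (by omega)
  rwa [Nat.sub_sub_self hi] at this


end HelpersA

section HelpersB
variable {W : Type*} [Fintype W] [DecidableEq W] (G : SimpleGraph W) [DecidableRel G.Adj]
  (C : Finset W) (ρ : ℕ) (γ α β : ℕ → ℕ)

lemma nbrs_eq (hC : IsCRC G C ρ γ α β) (hconn : G.Connected) (v : W) (j : Fin (ρ + 1)) :
    ((nbrsInCell G C (j : ℕ) v : ℕ) : ℂ) =
      quotientMatrix ℂ γ α β ρ ⟨codeDist G C v, Nat.lt_succ_of_le (hC.2.1 v)⟩ j := by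
  obtain ⟨hCne, hcov, hmax, hγ, hα, hβ⟩ := hC
  have hjρ : (j : ℕ) ≤ ρ := by omega
  have hiρ : codeDist G C v ≤ ρ := hcov v
  simp only [quotientMatrix, Matrix.of_apply]
  split_ifs with h1 h2 h3
  · have := hγ (codeDist G C v) (by omega) hiρ v rfl
    rw [show codeDist G C v - 1 = (j : ℕ) by omega] at this
    rw [this]
  · have := hα (codeDist G C v) hiρ v rfl
    rw [show (j : ℕ) = codeDist G C v from h2.symm, this]
  · have := hβ (codeDist G C v) hiρ v rfl
    rw [show (j : ℕ) = codeDist G C v + 1 from h3, this]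
  · have : nbrsInCell G C (j : ℕ) v = 0 := by
      rw [nbrsInCell, Finset.card_eq_zero, Finset.filter_eq_empty_iff]
      rintro z - ⟨hadj, hz⟩
      have l1 := cd_lip G C hCne hconn hadj
      have l2 := cd_lip G C hCne hconn hadj.symm
      rw [hz] at l1 l2
      omega
    rw [this]; norm_num

lemma phi_step (hC : IsCRC G C ρ γ α β) (hconn : G.Connected)
    (cl : W → Fin (ρ + 1)) (hcl : ∀ v, (cl v : ℕ) = codeDist G C v) (w : Fin (ρ + 1) → ℂ) :
    G.adjMatrix ℂ *ᵥ (fun v => w (cl v)) =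
      fun v => (quotientMatrix ℂ γ α β ρ *ᵥ w) (cl v) := by
  funext v
  rw [SimpleGraph.adjMatrix_mulVec_apply]
  rw [← Finset.sum_fiberwise (G.neighborFinset v) cl (fun z => w (cl z))]
  rw [Matrix.mulVec]
  show _ = quotientMatrix ℂ γ α β ρ (cl v) ⬝ᵥ w
  rw [dotProduct]
  refine Finset.sum_congr rfl fun j _ => ?_
  have hset : (G.neighborFinset v).filter (fun z => cl z = j) =
      Finset.univ.filter fun z => G.Adj v z ∧ codeDist G C z = (j : ℕ) := by
    ext z
    simp only [Finset.mem_filter, SimpleGraph.mem_neighborFinset, Finset.mem_univ, true_and]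
    constructor
    · rintro ⟨h1, h2⟩; exact ⟨h1, by rw [← hcl z, h2]⟩
    · rintro ⟨h1, h2⟩; exact ⟨h1, by rw [Fin.ext_iff, hcl z, h2]⟩
  calc (∑ z ∈ (G.neighborFinset v).filter (fun z => cl z = j), w (cl z))
      = ∑ z ∈ (G.neighborFinset v).filter (fun z => cl z = j), w j := by
        refine Finset.sum_congr rfl fun z hz => ?_
        rw [(Finset.mem_filter.mp hz).2]
    _ = ((nbrsInCell G C (j : ℕ) v : ℕ) : ℂ) * w j := by
        rw [Finset.sum_const, hset]; rw [nbrsInCell]; simp [mul_comm]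
    _ = quotientMatrix ℂ γ α β ρ (cl v) j * w j := by
        have hne := nbrs_eq G C ρ γ α β hC hconn v j
        have hfin : (⟨codeDist G C v, Nat.lt_succ_of_le (hC.2.1 v)⟩ : Fin (ρ + 1)) = cl v := by
          rw [Fin.ext_iff]; exact (hcl v).symm
        rw [← hfin, hne]


end HelpersB

section HelpersC
open Polynomial
variable {W : Type*} [Fintype W] [DecidableEq W] {D : ℕ}

lemma aeval_mul_right (A E : Matrix W W ℂ) (t : ℂ) (h : A * E = t • E) (p : ℂ[X]) :
    (aeval A p) * E = p.eval t • E := by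
  induction p using Polynomial.induction_on with
  | C a => simp [Algebra.algebraMap_eq_smul_one, smul_mul_assoc]
  | add p q hp hq => rw [map_add, add_mul, hp, hq, eval_add, add_smul]
  | monomial n a hp =>
    have : (C a : ℂ[X]) * X ^ (n + 1) = (C a * X ^ n) * X := by ring
    rw [this, _root_.map_mul, aeval_X, mul_assoc, h, mul_smul_comm, hp, smul_smul]
    congr 1
    simp [eval_mul]
    ring

lemma aeval_mulVec_eig {n : ℕ} (U : Matrix (Fin n) (Fin n) ℂ) (w : Fin n → ℂ) (t : ℂ)
    (h : U *ᵥ w = t • w) (p : ℂ[X]) : (aeval U p) *ᵥ w = p.eval t • w := by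
  induction p using Polynomial.induction_on with
  | C a => simp [Algebra.algebraMap_eq_smul_one, Matrix.smul_mulVec]
  | add p q hp hq => rw [map_add, Matrix.add_mulVec, hp, hq, eval_add, add_smul]
  | monomial n' a hp =>
    have e1 : (C a : ℂ[X]) * X ^ (n' + 1) = X * (C a * X ^ n') := by ring
    rw [e1, _root_.map_mul, aeval_X, ← Matrix.mulVec_mulVec, hp, Matrix.mulVec_smul, h,
      smul_smul]
    congr 1
    simp [eval_mul]
    ring

lemma aeval_phi {ρ : ℕ} (A : Matrix W W ℂ) (U : Matrix (Fin (ρ + 1)) (Fin (ρ + 1)) ℂ)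
    (cl : W → Fin (ρ + 1))
    (hstep : ∀ w : Fin (ρ + 1) → ℂ, A *ᵥ (fun v => w (cl v)) = fun v => (U *ᵥ w) (cl v))
    (p : ℂ[X]) (w : Fin (ρ + 1) → ℂ) :
    (aeval A p) *ᵥ (fun v => w (cl v)) = fun v => ((aeval U p) *ᵥ w) (cl v) := by
  induction p using Polynomial.induction_on generalizing w with
  | C a =>
    simp only [aeval_C, Algebra.algebraMap_eq_smul_one, Matrix.smul_mulVec,
      Matrix.one_mulVec]
    funext v; simp
  | add p q hp hq =>
    simp only [map_add, Matrix.add_mulVec, hp, hq]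
    funext v; simp
  | monomial n a hp =>
    have e1 : (C a : ℂ[X]) * X ^ (n + 1) = (C a * X ^ n) * X := by ring
    rw [e1]
    rw [show (aeval A) (C a * X ^ n * X) = (aeval A) (C a * X ^ n) * A by
      rw [_root_.map_mul, aeval_X]]
    rw [show (aeval U) (C a * X ^ n * X) = (aeval U) (C a * X ^ n) * U by
      rw [_root_.map_mul, aeval_X]]
    rw [← Matrix.mulVec_mulVec, hstep, hp (U *ᵥ w), ← Matrix.mulVec_mulVec]

lemma proj_eval {D ρ : ℕ} (A : Matrix W W ℂ) (θ : Fin (D + 1) → ℝ)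
    (hθinj : Function.Injective θ)
    (E : Fin (D + 1) → Matrix W W ℂ) (hAE : ∀ m, A * E m = (θ m : ℂ) • E m)
    (hsum : ∑ m, E m = 1)
    (U : Matrix (Fin (ρ + 1)) (Fin (ρ + 1)) ℂ) (cl : W → Fin (ρ + 1))
    (hstep : ∀ w : Fin (ρ + 1) → ℂ, A *ᵥ (fun v => w (cl v)) = fun v => (U *ᵥ w) (cl v))
    (idx : Fin (ρ + 1) → Fin (D + 1))
    (uc : Fin (ρ + 1) → Fin (ρ + 1) → ℂ)
    (hUuc : ∀ m, U *ᵥ uc m = (θ (idx m) : ℂ) • uc m)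
    (a : Fin (ρ + 1) → ℂ) (s : Fin (D + 1)) :
    E s *ᵥ (fun v => (∑ m, a m • uc m) (cl v)) =
      fun v => (∑ m, ((∏ l ∈ Finset.univ.erase s, ((θ s : ℂ) - θ l))⁻¹ * a m *
        (∏ l ∈ Finset.univ.erase s, ((θ (idx m) : ℂ) - θ l))) • uc m) (cl v) := by
  set p : ℂ[X] := ∏ l ∈ Finset.univ.erase s, (X - C ((θ l : ℂ))) with hp
  have heval : ∀ z : ℂ, p.eval z = ∏ l ∈ Finset.univ.erase s, (z - θ l) := by
    intro z; rw [hp, eval_prod]; exact Finset.prod_congr rfl fun l _ => by simp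
  set κ : ℂ := ∏ l ∈ Finset.univ.erase s, ((θ s : ℂ) - θ l) with hκdef
  have hκ : κ ≠ 0 := by
    rw [hκdef]
    apply Finset.prod_ne_zero_iff.mpr
    intro l hl
    have hls : l ≠ s := Finset.ne_of_mem_erase hl
    rw [sub_ne_zero]
    exact fun hc => hls (hθinj (by exact_mod_cast hc.symm))
  have hPA : aeval A p = κ • E s := by
    calc aeval A p = aeval A p * ∑ m, E m := by rw [hsum, mul_one]
      _ = ∑ m, aeval A p * E m := Finset.mul_sum _ _ _
      _ = ∑ m, p.eval ((θ m : ℂ)) • E m := by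
          exact Finset.sum_congr rfl fun m _ => aeval_mul_right A (E m) _ (hAE m) p
      _ = κ • E s := by
          rw [Finset.sum_eq_single s]
          · rw [heval]
          · intro m _ hms
            have : p.eval ((θ m : ℂ)) = 0 := by
              rw [heval]
              exact Finset.prod_eq_zero (Finset.mem_erase.mpr ⟨hms, Finset.mem_univ m⟩)
                (by simp)
            rw [this, zero_smul]
          · intro h; exact absurd (Finset.mem_univ s) h
  have hEs : E s = κ⁻¹ • aeval A p := by
    rw [hPA, smul_smul, inv_mul_cancel₀ hκ, one_smul]
  rw [hEs, Matrix.smul_mulVec, aeval_phi A U cl hstep]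
  have hUw : (aeval U p) *ᵥ (∑ m, a m • uc m) =
      ∑ m, (a m * p.eval ((θ (idx m) : ℂ))) • uc m := by
    have h1 : (aeval U p) *ᵥ (∑ m, a m • uc m) =
        ∑ m, (aeval U p) *ᵥ (a m • uc m) := by
      rw [← Matrix.mulVecLin_apply, map_sum]
      exact Finset.sum_congr rfl fun m _ => by rw [Matrix.mulVecLin_apply]
    rw [h1]
    refine Finset.sum_congr rfl fun m _ => ?_
    rw [Matrix.mulVec_smul, aeval_mulVec_eig U (uc m) _ (hUuc m) p, smul_smul, mul_comm]
  rw [hUw]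
  funext v
  simp only [Pi.smul_apply, Finset.sum_apply, smul_eq_mul]
  rw [Finset.mul_sum]
  refine Finset.sum_congr rfl fun m _ => ?_
  rw [heval]
  ring

lemma kappa_ne_zero {D : ℕ} (θ : Fin (D + 1) → ℝ) (hθinj : Function.Injective θ)
    (s : Fin (D + 1)) : ∏ l ∈ Finset.univ.erase s, ((θ s : ℂ) - θ l) ≠ 0 := by
  apply Finset.prod_ne_zero_iff.mpr
  intro l hl
  have hls : l ≠ s := Finset.ne_of_mem_erase hl
  rw [sub_ne_zero]
  exact fun hc => hls (hθinj (by exact_mod_cast hc.symm))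

lemma proj_idx {D ρ : ℕ} (A : Matrix W W ℂ) (θ : Fin (D + 1) → ℝ)
    (hθinj : Function.Injective θ)
    (E : Fin (D + 1) → Matrix W W ℂ) (hAE : ∀ m, A * E m = (θ m : ℂ) • E m)
    (hsum : ∑ m, E m = 1)
    (U : Matrix (Fin (ρ + 1)) (Fin (ρ + 1)) ℂ) (cl : W → Fin (ρ + 1))
    (hstep : ∀ w : Fin (ρ + 1) → ℂ, A *ᵥ (fun v => w (cl v)) = fun v => (U *ᵥ w) (cl v))
    (idx : Fin (ρ + 1) → Fin (D + 1)) (hidxinj : Function.Injective idx)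
    (uc : Fin (ρ + 1) → Fin (ρ + 1) → ℂ)
    (hUuc : ∀ m, U *ᵥ uc m = (θ (idx m) : ℂ) • uc m)
    (a : Fin (ρ + 1) → ℂ) (j : Fin (ρ + 1)) :
    E (idx j) *ᵥ (fun v => (∑ m, a m • uc m) (cl v)) =
      a j • fun v => uc j (cl v) := by
  rw [proj_eval A θ hθinj E hAE hsum U cl hstep idx uc hUuc a (idx j)]
  funext v
  simp only [Finset.sum_apply, Pi.smul_apply, smul_eq_mul]
  rw [Finset.sum_eq_single j]
  · have hκ := kappa_ne_zero θ hθinj (idx j)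
    field_simp
  · intro m _ hmj
    have hmem : idx m ∈ Finset.univ.erase (idx j) :=
      Finset.mem_erase.mpr ⟨fun hc => hmj (hidxinj hc), Finset.mem_univ _⟩
    have hz : ∏ l ∈ Finset.univ.erase (idx j), ((θ (idx m) : ℂ) - θ l) = 0 :=
      Finset.prod_eq_zero hmem (by simp)
    rw [hz, mul_zero, zero_mul]
  · intro h; exact absurd (Finset.mem_univ j) h

lemma proj_notin {D ρ : ℕ} (A : Matrix W W ℂ) (θ : Fin (D + 1) → ℝ)
    (hθinj : Function.Injective θ)
    (E : Fin (D + 1) → Matrix W W ℂ) (hAE : ∀ m, A * E m = (θ m : ℂ) • E m)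
    (hsum : ∑ m, E m = 1)
    (U : Matrix (Fin (ρ + 1)) (Fin (ρ + 1)) ℂ) (cl : W → Fin (ρ + 1))
    (hstep : ∀ w : Fin (ρ + 1) → ℂ, A *ᵥ (fun v => w (cl v)) = fun v => (U *ᵥ w) (cl v))
    (idx : Fin (ρ + 1) → Fin (D + 1))
    (uc : Fin (ρ + 1) → Fin (ρ + 1) → ℂ)
    (hUuc : ∀ m, U *ᵥ uc m = (θ (idx m) : ℂ) • uc m)
    (a : Fin (ρ + 1) → ℂ) (s : Fin (D + 1)) (hs : s ∉ Set.range idx) :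
    E s *ᵥ (fun v => (∑ m, a m • uc m) (cl v)) = 0 := by
  rw [proj_eval A θ hθinj E hAE hsum U cl hstep idx uc hUuc a s]
  funext v
  simp only [Finset.sum_apply, Pi.smul_apply, smul_eq_mul, Pi.zero_apply]
  apply Finset.sum_eq_zero
  intro m _
  have hmem : idx m ∈ Finset.univ.erase s :=
    Finset.mem_erase.mpr ⟨fun hc => hs ⟨m, hc⟩, Finset.mem_univ _⟩
  have hz : ∏ l ∈ Finset.univ.erase s, ((θ (idx m) : ℂ) - θ l) = 0 :=
    Finset.prod_eq_zero hmem (by simp)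
  rw [hz, mul_zero, zero_mul]


end HelpersC

lemma key_swap {W : Type*} [Fintype W] (M N P : Matrix W W ℂ) :
    ∑ a : W, ∑ b : W, ∑ v : W, ∑ v' : W,
      (starRingEnd ℂ) (M v a) * (starRingEnd ℂ) (N v b) * P v v' * (M v' a * N v' b) =
    ∑ v : W, ∑ v' : W, P v v' * (M * Mᴴ) v' v * (N * Nᴴ) v' v := by
  have f : W → W → W → W → ℂ := fun a b v v' =>
      (starRingEnd ℂ) (M v a) * (starRingEnd ℂ) (N v b) * P v v' * (M v' a * N v' b)
  calc ∑ a : W, ∑ b : W, ∑ v : W, ∑ v' : W,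
      (starRingEnd ℂ) (M v a) * (starRingEnd ℂ) (N v b) * P v v' * (M v' a * N v' b)
      = ∑ a : W, ∑ v : W, ∑ b : W, ∑ v' : W,
          (starRingEnd ℂ) (M v a) * (starRingEnd ℂ) (N v b) * P v v' * (M v' a * N v' b) :=
        Finset.sum_congr rfl fun a _ => Finset.sum_comm
    _ = ∑ v : W, ∑ a : W, ∑ b : W, ∑ v' : W,
          (starRingEnd ℂ) (M v a) * (starRingEnd ℂ) (N v b) * P v v' * (M v' a * N v' b) :=
        Finset.sum_comm
    _ = ∑ v : W, ∑ a : W, ∑ v' : W, ∑ b : W,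
          (starRingEnd ℂ) (M v a) * (starRingEnd ℂ) (N v b) * P v v' * (M v' a * N v' b) :=
        Finset.sum_congr rfl fun v _ => Finset.sum_congr rfl fun a _ => Finset.sum_comm
    _ = ∑ v : W, ∑ v' : W, ∑ a : W, ∑ b : W,
          (starRingEnd ℂ) (M v a) * (starRingEnd ℂ) (N v b) * P v v' * (M v' a * N v' b) :=
        Finset.sum_congr rfl fun v _ => Finset.sum_comm
    _ = ∑ v : W, ∑ v' : W, P v v' * (∑ a, M v' a * Mᴴ a v) * (∑ b, N v' b * Nᴴ b v) := by
        refine Finset.sum_congr rfl fun v _ => Finset.sum_congr rfl fun v' _ => ?_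
        conv_rhs => rw [mul_assoc, Finset.sum_mul_sum, Finset.mul_sum]
        refine Finset.sum_congr rfl fun a _ => ?_
        conv_rhs => rw [Finset.mul_sum]
        refine Finset.sum_congr rfl fun b _ => ?_
        simp only [Matrix.conjTranspose_apply, Complex.star_def]
        ring
    _ = ∑ v : W, ∑ v' : W, P v v' * (M * Mᴴ) v' v * (N * Nᴴ) v' v := by
        simp only [Matrix.mul_apply]

lemma krein_vanish {W : Type*} [Fintype W] [DecidableEq W] {D : ℕ}
    (E : Fin (D + 1) → Matrix W W ℂ)
    (hherm : ∀ j, (E j)ᴴ = E j) (hidem : ∀ j, E j * E j = E j)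
    (horth : ∀ l m : Fin (D + 1), l ≠ m → E l * E m = 0)
    (q : Fin (D + 1) → Fin (D + 1) → Fin (D + 1) → ℝ)
    (hq : ∀ i j, Matrix.hadamard (E i) (E j) =
      (Fintype.card W : ℂ)⁻¹ • ∑ l, (q i j l : ℂ) • E l)
    (i i' l : Fin (D + 1)) (hql : q i i' l = 0) (f g : W → ℂ) :
    E l *ᵥ ((E i *ᵥ f) * (E i' *ᵥ g)) = 0 := by
  classical
  set h : W → W → W → ℂ := fun a b v => E i v a * E i' v b with hh
  -- step 1 : each summand is a norm square
  have hz : ∀ a b : W, star (E l *ᵥ h a b) ⬝ᵥ (E l *ᵥ h a b) =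
      star (h a b) ⬝ᵥ (E l *ᵥ h a b) := by
    intro a b
    rw [Matrix.star_mulVec, ← Matrix.dotProduct_mulVec, Matrix.mulVec_mulVec,
      hherm l, hidem l]
  -- step 2 : total sum equals a Krein expression
  have hT : ∑ a : W, ∑ b : W, star (h a b) ⬝ᵥ (E l *ᵥ h a b) = 0 := by
    have e1 : ∀ a b : W, star (h a b) ⬝ᵥ (E l *ᵥ h a b) =
        ∑ v : W, ∑ v' : W,
          (starRingEnd ℂ) (E i v a) * (starRingEnd ℂ) (E i' v b) * E l v v' *
            (E i v' a * E i' v' b) := by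
      intro a b
      simp only [dotProduct, Matrix.mulVec, Pi.star_apply, hh]
      refine Finset.sum_congr rfl fun v _ => ?_
      rw [Finset.mul_sum]
      refine Finset.sum_congr rfl fun v' _ => ?_
      simp only [star_mul', Complex.star_def, dotProduct]
      ring
    calc ∑ a : W, ∑ b : W, star (h a b) ⬝ᵥ (E l *ᵥ h a b)
        = ∑ a : W, ∑ b : W, ∑ v : W, ∑ v' : W,
            (starRingEnd ℂ) (E i v a) * (starRingEnd ℂ) (E i' v b) * E l v v' *
              (E i v' a * E i' v' b) :=
          Finset.sum_congr rfl fun a _ => Finset.sum_congr rfl fun b _ => e1 a b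
      _ = ∑ v : W, ∑ v' : W, E l v v' * (E i * (E i)ᴴ) v' v * (E i' * (E i')ᴴ) v' v :=
          key_swap (E i) (E i') (E l)
      _ = ∑ v : W, ∑ v' : W, E l v v' * Matrix.hadamard (E i) (E i') v' v := by
          refine Finset.sum_congr rfl fun v _ => Finset.sum_congr rfl fun v' _ => ?_
          rw [hherm i, hidem i, hherm i', hidem i', Matrix.hadamard_apply]
          ring
      _ = ∑ m : Fin (D + 1), (Fintype.card W : ℂ)⁻¹ * (q i i' m : ℂ) *
            ∑ v : W, ∑ v' : W, E l v v' * E m v' v := by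
          have e2 : ∀ v v' : W, E l v v' * Matrix.hadamard (E i) (E i') v' v =
              ∑ m, (Fintype.card W : ℂ)⁻¹ * (q i i' m : ℂ) * (E l v v' * E m v' v) := by
            intro v v'
            rw [hq i i']
            simp only [Matrix.smul_apply, Matrix.sum_apply, smul_eq_mul]
            rw [Finset.mul_sum, Finset.mul_sum]
            refine Finset.sum_congr rfl fun m _ => by ring
          calc ∑ v : W, ∑ v' : W, E l v v' * Matrix.hadamard (E i) (E i') v' v
              = ∑ v : W, ∑ v' : W, ∑ m : Fin (D + 1),
                  (Fintype.card W : ℂ)⁻¹ * (q i i' m : ℂ) * (E l v v' * E m v' v) :=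
              Finset.sum_congr rfl fun v _ => Finset.sum_congr rfl fun v' _ => e2 v v'
            _ = ∑ v : W, ∑ m : Fin (D + 1), ∑ v' : W,
                  (Fintype.card W : ℂ)⁻¹ * (q i i' m : ℂ) * (E l v v' * E m v' v) :=
              Finset.sum_congr rfl fun v _ => Finset.sum_comm
            _ = ∑ m : Fin (D + 1), ∑ v : W, ∑ v' : W,
                  (Fintype.card W : ℂ)⁻¹ * (q i i' m : ℂ) * (E l v v' * E m v' v) :=
              Finset.sum_comm
            _ = ∑ m : Fin (D + 1), (Fintype.card W : ℂ)⁻¹ * (q i i' m : ℂ) *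
                  ∑ v : W, ∑ v' : W, E l v v' * E m v' v := by
              refine Finset.sum_congr rfl fun m _ => ?_
              rw [Finset.mul_sum]
              refine Finset.sum_congr rfl fun v _ => ?_
              rw [Finset.mul_sum]
      _ = 0 := by
          apply Finset.sum_eq_zero
          intro m _
          by_cases hm : m = l
          · rw [hm, hql]; simp
          · have : E l * E m = 0 := horth l m (Ne.symm hm)
            have hz2 : ∑ v : W, ∑ v' : W, E l v v' * E m v' v = 0 := by
              have : ∀ v : W, ∑ v' : W, E l v v' * E m v' v = 0 := by
                intro v
                have := congrFun (congrFun this v) v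
                simpa [Matrix.mul_apply] using this
              simp [this]
            rw [hz2, mul_zero]
  -- step 3 : each basis term vanishes
  have hzero : ∀ a b : W, E l *ᵥ h a b = 0 := by
    have hr : ∀ a b : W, star (h a b) ⬝ᵥ (E l *ᵥ h a b) =
        ((∑ w : W, Complex.normSq ((E l *ᵥ h a b) w) : ℝ) : ℂ) := by
      intro a b
      rw [← hz a b]
      rw [dotProduct]
      push_cast
      refine Finset.sum_congr rfl fun w _ => ?_
      rw [Pi.star_apply, Complex.star_def, mul_comm, Complex.mul_conj]
    have hsum0 : ∑ a : W, ∑ b : W,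
        (∑ w : W, Complex.normSq ((E l *ᵥ h a b) w)) = 0 := by
      have : ((∑ a : W, ∑ b : W,
          (∑ w : W, Complex.normSq ((E l *ᵥ h a b) w)) : ℝ) : ℂ) = 0 := by
        push_cast
        rw [← hT]
        refine Finset.sum_congr rfl fun a _ => Finset.sum_congr rfl fun b _ => ?_
        rw [hr a b]
        push_cast
        rfl
      exact_mod_cast this
    intro a b
    have hnn : ∀ x ∈ (Finset.univ : Finset W), 0 ≤ ∑ b : W,
        (∑ w : W, Complex.normSq ((E l *ᵥ h x b) w)) := by
      intro x _
      apply Finset.sum_nonneg; intro y _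
      apply Finset.sum_nonneg; intro w _
      exact Complex.normSq_nonneg _
    have h1 := (Finset.sum_eq_zero_iff_of_nonneg hnn).mp hsum0 a (Finset.mem_univ a)
    have hnn2 : ∀ y ∈ (Finset.univ : Finset W), 0 ≤
        (∑ w : W, Complex.normSq ((E l *ᵥ h a y) w)) := by
      intro y _
      apply Finset.sum_nonneg; intro w _
      exact Complex.normSq_nonneg _
    have h2 := (Finset.sum_eq_zero_iff_of_nonneg hnn2).mp h1 b (Finset.mem_univ b)
    have hnn3 : ∀ w ∈ (Finset.univ : Finset W),
        0 ≤ Complex.normSq ((E l *ᵥ h a b) w) := fun w _ => Complex.normSq_nonneg _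
    have h3 := (Finset.sum_eq_zero_iff_of_nonneg hnn3).mp h2
    funext w
    exact Complex.normSq_eq_zero.mp (h3 w (Finset.mem_univ w))
  -- step 4 : bilinearity
  have hexp : (E i *ᵥ f) * (E i' *ᵥ g) = ∑ a : W, ∑ b : W, (f a * g b) • h a b := by
    funext v
    simp only [Pi.mul_apply, Finset.sum_apply, Pi.smul_apply, smul_eq_mul,
      Matrix.mulVec, dotProduct, hh]
    rw [Finset.sum_mul_sum]
    refine Finset.sum_congr rfl fun a _ => Finset.sum_congr rfl fun b _ => by ring
  rw [hexp]
  have : E l *ᵥ (∑ a : W, ∑ b : W, (f a * g b) • h a b) =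
      ∑ a : W, ∑ b : W, (f a * g b) • (E l *ᵥ h a b) := by
    rw [← Matrix.mulVecLin_apply, map_sum]
    refine Finset.sum_congr rfl fun a _ => ?_
    rw [map_sum]
    refine Finset.sum_congr rfl fun b _ => ?_
    rw [_root_.map_smul, Matrix.mulVecLin_apply]
  rw [this]
  apply Finset.sum_eq_zero
  intro a _
  apply Finset.sum_eq_zero
  intro b _
  rw [hzero a b, smul_zero]



lemma dot_sum_smul {n : ℕ} (v : Fin n → ℝ) (c : Fin n → ℝ) (w : Fin n → Fin n → ℝ) :
    v ⬝ᵥ (∑ m, c m • w m) = ∑ m, c m * (v ⬝ᵥ w m) := by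
  simp only [dotProduct, Finset.sum_apply, Pi.smul_apply, smul_eq_mul, Finset.mul_sum]
  rw [Finset.sum_comm]
  refine Finset.sum_congr rfl fun m _ => ?_
  refine Finset.sum_congr rfl fun j _ => by ring

lemma exists_coeff {ρ D : ℕ} (θ : Fin (D + 1) → ℝ) (hθinj : Function.Injective θ)
    (idx : Fin (ρ + 1) → Fin (D + 1)) (hidxinj : Function.Injective idx)
    (γ α β : ℕ → ℕ) (hγ : ∀ i, 1 ≤ i → i ≤ ρ → γ i ≠ 0)
    (u : Fin (ρ + 1) → Fin (ρ + 1) → ℝ)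
    (hu : ∀ j, quotientMatrix ℝ γ α β ρ *ᵥ u j = θ (idx j) • u j)
    (hu0 : ∀ j, u j 0 = 1) :
    ∃ cR : Fin (ρ + 1) → ℝ, cR 1 ≠ 0 ∧
      (fun j : Fin (ρ + 1) => if j = 0 then (1 : ℝ) else 0) = ∑ m, cR m • u m := by
  classical
  set UR := quotientMatrix ℝ γ α β ρ with hUR
  -- the standard eigenvectors are linearly independent, hence a basis
  have heig : ∀ j, Module.End.HasEigenvector
      (Matrix.mulVecLin UR : Module.End ℝ (Fin (ρ + 1) → ℝ)) (θ (idx j)) (u j) := by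
    intro j
    constructor
    · rw [Module.End.mem_eigenspace_iff]
      simpa [Matrix.mulVecLin_apply] using hu j
    · intro h0
      have := congrFun h0 0
      rw [hu0 j] at this
      simpa using this
  have hlin : LinearIndependent ℝ u :=
    Module.End.eigenvectors_linearIndependent' (Matrix.mulVecLin UR)
      (fun j => θ (idx j)) (fun a b h => hidxinj (hθinj h)) u heig
  have hcard : Fintype.card (Fin (ρ + 1)) = Module.finrank ℝ (Fin (ρ + 1) → ℝ) := by
    simp [Module.finrank_fin_fun]
  let B : Module.Basis (Fin (ρ + 1)) ℝ (Fin (ρ + 1) → ℝ) :=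
    basisOfLinearIndependentOfCardEqFinrank hlin hcard
  have hB : ∀ m, B m = u m := fun m => by
    simp [B, coe_basisOfLinearIndependentOfCardEqFinrank]
  set δ0 : Fin (ρ + 1) → ℝ := fun j => if j = 0 then 1 else 0 with hδ0
  set cR : Fin (ρ + 1) → ℝ := fun m => B.repr δ0 m with hcR
  have hrep : δ0 = ∑ m, cR m • u m := by
    have := B.sum_repr δ0
    rw [← this]
    exact (Finset.sum_congr rfl fun m _ => by rw [hB m]).symm
  refine ⟨cR, ?_, hrep⟩
  -- left eigenvector argument
  have hu1ne : u 1 ≠ 0 := (heig 1).2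
  have hdet : (UR - θ (idx 1) • 1).det = 0 := by
    rw [← Matrix.exists_mulVec_eq_zero_iff]
    refine ⟨u 1, hu1ne, ?_⟩
    rw [Matrix.sub_mulVec, Matrix.smul_mulVec, Matrix.one_mulVec, hu 1, sub_self]
  have hdetT : ((UR - θ (idx 1) • 1)ᵀ).det = 0 := by rw [Matrix.det_transpose]; exact hdet
  obtain ⟨v, hvne, hveq0⟩ := Matrix.exists_mulVec_eq_zero_iff.mpr hdetT
  have hveq : URᵀ *ᵥ v = θ (idx 1) • v := by
    have h2 : (URᵀ - θ (idx 1) • 1) *ᵥ v = 0 := by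
      have he : (UR - θ (idx 1) • 1)ᵀ = URᵀ - θ (idx 1) • 1 := by
        rw [Matrix.transpose_sub, Matrix.transpose_smul, Matrix.transpose_one]
      rwa [he] at hveq0
    rwa [Matrix.sub_mulVec, Matrix.smul_mulVec, Matrix.one_mulVec, sub_eq_zero] at h2
  -- v 0 ≠ 0
  have hv0 : v 0 ≠ 0 := by
    intro hv0
    apply hvne
    have hall : ∀ n (hn : n < ρ + 1), v ⟨n, hn⟩ = 0 := by
      intro n
      induction n using Nat.strong_induction_on with
      | _ n IH =>
        intro hn
        rcases Nat.eq_zero_or_pos n with h0 | hpos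
        · subst h0
          show v ⟨0, hn⟩ = 0
          have : (⟨0, hn⟩ : Fin (ρ + 1)) = 0 := rfl
          rw [this]; exact hv0
        · obtain ⟨m, rfl⟩ : ∃ m, n = m + 1 := ⟨n - 1, by omega⟩
          have hm : m < ρ + 1 := by omega
          have heq := congrFun hveq ⟨m, hm⟩
          have hlhs : (URᵀ *ᵥ v) ⟨m, hm⟩ = ∑ i, UR i ⟨m, hm⟩ * v i := by
            rw [Matrix.mulVec, dotProduct]
            exact Finset.sum_congr rfl fun i _ => by rw [Matrix.transpose_apply]
          have hsum : ∑ i, UR i ⟨m, hm⟩ * v i = (γ (m + 1) : ℝ) * v ⟨m + 1, hn⟩ := by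
            rw [Finset.sum_eq_single (⟨m + 1, hn⟩ : Fin (ρ + 1))]
            · congr 1
              show UR ⟨m + 1, hn⟩ ⟨m, hm⟩ = _
              rw [hUR]
              simp [quotientMatrix]
            · intro i _ hi
              by_cases hle : (i : ℕ) ≤ m
              · have hvi : v i = 0 := by
                  have := IH (i : ℕ) (by omega) i.isLt
                  simpa [Fin.eta] using this
                rw [hvi, mul_zero]
              · have hge : (i : ℕ) ≥ m + 2 := by
                  rcases Nat.lt_or_ge (i : ℕ) (m + 2) with h | h
                  · exfalso
                    apply hi
                    apply Fin.ext
                    show (i : ℕ) = m + 1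
                    omega
                  · exact h
                have hz : UR i ⟨m, hm⟩ = 0 := by
                  rw [hUR]
                  simp only [quotientMatrix, Matrix.of_apply]
                  split_ifs with h1 h2 h3
                  · exact absurd h1 (by omega)
                  · exact absurd h2 (by omega)
                  · exact absurd h3 (by omega)
                  · rfl
                rw [hz, zero_mul]
            · intro h; exact absurd (Finset.mem_univ _) h
          have hvm : v ⟨m, hm⟩ = 0 := IH m (by omega) hm
          rw [hlhs, hsum] at heq
          simp only [Pi.smul_apply, smul_eq_mul, hvm, mul_zero] at heq
          have hγne : (γ (m + 1) : ℝ) ≠ 0 :=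
            Nat.cast_ne_zero.mpr (hγ (m + 1) (by omega) (by omega))
          exact (mul_eq_zero.mp heq).resolve_left hγne
    funext i
    show v i = 0
    have := hall i i.isLt
    simpa [Fin.eta] using this
  -- orthogonality
  have horth : ∀ m, m ≠ 1 → v ⬝ᵥ u m = 0 := by
    intro m hm
    have h1 : v ⬝ᵥ (UR *ᵥ u m) = θ (idx m) * (v ⬝ᵥ u m) := by
      rw [hu m, dotProduct_smul, smul_eq_mul]
    have h2 : v ⬝ᵥ (UR *ᵥ u m) = θ (idx 1) * (v ⬝ᵥ u m) := by
      rw [Matrix.dotProduct_mulVec, ← Matrix.mulVec_transpose, hveq,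
        smul_dotProduct, smul_eq_mul]
    have hne : θ (idx m) ≠ θ (idx 1) := fun hc => hm (hidxinj (hθinj hc))
    have := h1.symm.trans h2
    rcases mul_eq_mul_right_iff.mp this with h | h
    · exact absurd h hne
    · exact h
  have hvu1 : v ⬝ᵥ u 1 ≠ 0 := by
    intro hvu1
    apply hvne
    have hallm : ∀ m, v ⬝ᵥ u m = 0 := by
      intro m
      by_cases hm : m = 1
      · rw [hm]; exact hvu1
      · exact horth m hm
    have hvrep := B.sum_repr v
    have h4 : v ⬝ᵥ (∑ i, B.repr v i • B i) = 0 := by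
      have he : v ⬝ᵥ (∑ i, B.repr v i • B i) = ∑ i, B.repr v i * (v ⬝ᵥ u i) := by
        rw [show (∑ i, B.repr v i • B i) = ∑ i, B.repr v i • u i from
          Finset.sum_congr rfl fun i _ => by rw [hB i], dot_sum_smul]
      rw [he]
      exact Finset.sum_eq_zero fun m _ => by rw [hallm m, mul_zero]
    have hvv : v ⬝ᵥ v = 0 := by rw [hvrep] at h4; exact h4
    exact dotProduct_self_eq_zero.mp hvv
  -- conclude
  have hkey : v ⬝ᵥ δ0 = cR 1 * (v ⬝ᵥ u 1) := by
    calc v ⬝ᵥ δ0 = v ⬝ᵥ (∑ m, cR m • u m) := by rw [← hrep]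
      _ = ∑ m, cR m * (v ⬝ᵥ u m) := dot_sum_smul v cR u
      _ = cR 1 * (v ⬝ᵥ u 1) := by
          rw [Finset.sum_eq_single 1]
          · intro m _ hm; rw [horth m hm, mul_zero]
          · intro h; exact absurd (Finset.mem_univ _) h
  have hvδ0 : v ⬝ᵥ δ0 = v 0 := by
    rw [dotProduct]
    rw [Finset.sum_eq_single 0]
    · simp [hδ0]
    · intro m _ hm; simp [hδ0, hm]
    · intro h; exact absurd (Finset.mem_univ _) h
  intro hc1
  rw [hc1, zero_mul] at hkey
  rw [hvδ0] at hkey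
  exact hv0 hkey


lemma matsum_mulVec {W ι : Type*} [Fintype W] (s : Finset ι) (M : ι → Matrix W W ℂ)
    (v : W → ℂ) : (∑ i ∈ s, M i) *ᵥ v = ∑ i ∈ s, M i *ᵥ v := by
  classical
  induction s using Finset.cons_induction with
  | empty => simp [Matrix.zero_mulVec]
  | cons a s ha ih => rw [Finset.sum_cons, Finset.sum_cons, Matrix.add_mulVec, ih]

lemma vecsum_mulVec {W ι : Type*} [Fintype W] (s : Finset ι) (M : Matrix W W ℂ)
    (w : ι → W → ℂ) : M *ᵥ (∑ i ∈ s, w i) = ∑ i ∈ s, M *ᵥ w i := by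
  rw [← Matrix.mulVecLin_apply, map_sum]
  exact Finset.sum_congr rfl fun i _ => by rw [Matrix.mulVecLin_apply]

theorem stmt13 {V : Type*} [Fintype V] [DecidableEq V]
    (G : SimpleGraph V) [DecidableRel G.Adj] (k D : ℕ) (b c : ℕ → ℕ)
    (hG : IsDRG G k D b c)
    (θ : Fin (D + 1) → ℝ) (hθ0 : θ 0 = k)
    (E : Fin (D + 1) → Matrix V V ℂ) (hPI : PrimIdem (G.adjMatrix ℂ) D θ E)
    (q : Fin (D + 1) → Fin (D + 1) → Fin (D + 1) → ℝ) (hq : KreinRel D E q)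
    (C : Finset V) (ρ : ℕ) (γ α β : ℕ → ℕ)
    (hC : IsCRC G C ρ γ α β)
    (idx : Fin (ρ + 1) → Fin (D + 1)) (hidx0 : idx 0 = 0)
    (hidxinj : Function.Injective idx)
    (hspec : spectrum ℂ (quotientMatrix ℂ γ α β ρ) =
      Set.range fun j => (θ (idx j) : ℂ))
    (u : Fin (ρ + 1) → Fin (ρ + 1) → ℝ)
    (hu : ∀ j, quotientMatrix ℝ γ α β ρ *ᵥ u j = θ (idx j) • u j)
    (hu0 : ∀ j, u j 0 = 1)
    (lam tau : Fin (ρ + 1) → ℝ)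
    (hlam : u 1 * u 1 = ∑ j, lam j • u j)
    (htau : u 1 * u 1 * u 1 = ∑ j, tau j • u j) :
    ∀ j : Fin (ρ + 1),
      (lam j ≠ 0 → q (idx 1) (idx 1) (idx j) ≠ 0) ∧
        (tau j ≠ 0 → ∃ l : Fin (ρ + 1),
          q (idx 1) (idx 1) (idx l) ≠ 0 ∧ q (idx l) (idx 1) (idx j) ≠ 0) := by
  classical
  have hconn : G.Connected := hG.1
  have hCne : C.Nonempty := hC.1
  have hcov : ∀ v, codeDist G C v ≤ ρ := hC.2.1
  obtain ⟨hθinj, hidem, hherm, hAE, hEsum, hEne⟩ := hPI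
  -- positivity of the γ's
  have hγpos : ∀ i, 1 ≤ i → i ≤ ρ → γ i ≠ 0 := by
    intro i h1 h2 h0
    obtain ⟨v, hv⟩ := cd_cell_nonempty G C hCne hconn hC.2.2.1 i h2
    obtain ⟨m, rfl⟩ : ∃ m, i = m + 1 := ⟨i - 1, by omega⟩
    obtain ⟨z, hadj, hz⟩ := cd_descend G C hCne hconn hv
    have hcard : nbrsInCell G C m v = γ (m + 1) := by
      have h3 := hC.2.2.2.1 (m + 1) h1 h2 v hv
      simpa using h3
    have hzmem : z ∈ Finset.univ.filter fun w => G.Adj v w ∧ codeDist G C w = m := by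
      simp [hadj, hz]
    have hpos : 0 < nbrsInCell G C m v := Finset.card_pos.mpr ⟨z, hzmem⟩
    omega
  -- notation
  set cl : V → Fin (ρ + 1) := fun v => ⟨codeDist G C v, Nat.lt_succ_of_le (hcov v)⟩
    with hcldef
  have hcl : ∀ v, (cl v : ℕ) = codeDist G C v := fun v => rfl
  set A := G.adjMatrix ℂ with hA
  set U := quotientMatrix ℂ γ α β ρ with hUdef
  set UR := quotientMatrix ℝ γ α β ρ with hURdef
  set uc : Fin (ρ + 1) → Fin (ρ + 1) → ℂ := fun m i => ((u m i : ℝ) : ℂ) with hucdef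
  set x := charVec (V := V) C with hxdef
  -- complexified eigenvector equation
  have hcast : ∀ w : Fin (ρ + 1) → ℝ,
      U *ᵥ (fun i => ((w i : ℝ) : ℂ)) = fun i => (((UR *ᵥ w) i : ℝ) : ℂ) := by
    intro w
    funext i
    simp only [hUdef, hURdef, Matrix.mulVec, dotProduct, quotientMatrix,
      Matrix.of_apply]
    push_cast
    refine Finset.sum_congr rfl fun j _ => ?_
    split_ifs <;> push_cast <;> ring
  have hUuc : ∀ m, U *ᵥ uc m = ((θ (idx m) : ℝ) : ℂ) • uc m := by
    intro m
    calc U *ᵥ uc m = fun i => (((UR *ᵥ u m) i : ℝ) : ℂ) := hcast (u m)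
      _ = ((θ (idx m) : ℝ) : ℂ) • uc m := by
          funext i
          rw [hu m]
          simp only [Pi.smul_apply, smul_eq_mul, hucdef]
          push_cast
          ring
  -- the adjacency matrix is hermitian, and the idempotents are pairwise orthogonal
  have hAH : Aᴴ = A := by
    rw [hA]
    ext a b
    simp only [Matrix.conjTranspose_apply, SimpleGraph.adjMatrix_apply]
    by_cases hab : G.Adj a b
    · rw [if_pos hab, if_pos ((G.adj_comm a b).mp hab)]
      simp
    · rw [if_neg hab, if_neg (fun h => hab ((G.adj_comm b a).mp h))]
      simp
  have hEA : ∀ l, E l * A = ((θ l : ℝ) : ℂ) • E l := by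
    intro l
    have h1 := congrArg Matrix.conjTranspose (hAE l)
    rw [Matrix.conjTranspose_mul, hherm l, hAH, Matrix.conjTranspose_smul, hherm l] at h1
    rw [h1]
    congr 1
    exact Complex.conj_ofReal _
  have horth : ∀ l m : Fin (D + 1), l ≠ m → E l * E m = 0 := by
    intro l m hlm
    have h1 : E l * (A * E m) = ((θ m : ℝ) : ℂ) • (E l * E m) := by
      rw [hAE m, Matrix.mul_smul]
    have h2 : E l * A * E m = ((θ l : ℝ) : ℂ) • (E l * E m) := by
      rw [hEA l, Matrix.smul_mul]
    have h3 : (((θ l : ℝ) : ℂ) - ((θ m : ℝ) : ℂ)) • (E l * E m) = 0 := by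
      rw [sub_smul, ← h1, ← h2, mul_assoc, sub_self]
    have hne : (((θ l : ℝ) : ℂ) - ((θ m : ℝ) : ℂ)) ≠ 0 :=
      sub_ne_zero.mpr fun hc => hlm (hθinj (by exact_mod_cast hc))
    exact (smul_eq_zero.mp h3).resolve_left hne
  -- quotient matrix action on class functions
  have hstep : ∀ w : Fin (ρ + 1) → ℂ,
      A *ᵥ (fun v => w (cl v)) = fun v => (U *ᵥ w) (cl v) :=
    phi_step G C ρ γ α β hC hconn cl hcl
  -- the expansion of the characteristic vector
  obtain ⟨cR, hc1, hrep⟩ := exists_coeff θ hθinj idx hidxinj γ α β hγpos u hu hu0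
  set cc : Fin (ρ + 1) → ℂ := fun m => ((cR m : ℝ) : ℂ) with hccdef
  have hcc1 : cc 1 ≠ 0 := Complex.ofReal_ne_zero.mpr hc1
  have hxΦ : x = fun v => (∑ m, cc m • uc m) (cl v) := by
    funext v
    have hrv : (∑ m, cR m * u m (cl v)) = (if cl v = 0 then (1 : ℝ) else 0) := by
      have h5 := congrFun hrep (cl v)
      simp only [Finset.sum_apply, Pi.smul_apply, smul_eq_mul] at h5
      exact h5.symm
    have hiff : cl v = 0 ↔ v ∈ C := by
      rw [Fin.ext_iff]
      show codeDist G C v = (0 : Fin (ρ + 1)).val ↔ _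
      simp only [Fin.val_zero]
      exact cd_zero_iff G C hCne hconn v
    show (if v ∈ C then (1 : ℂ) else 0) = _
    simp only [Finset.sum_apply, Pi.smul_apply, smul_eq_mul]
    have hcastsum : (∑ m, cc m * uc m (cl v)) = ((∑ m, cR m * u m (cl v) : ℝ) : ℂ) := by
      simp only [hccdef, hucdef]
      push_cast
      rfl
    rw [hcastsum, hrv]
    by_cases hvC : v ∈ C
    · rw [if_pos hvC, if_pos (hiff.mpr hvC)]; norm_num
    · rw [if_neg hvC, if_neg (fun h => hvC (hiff.mp h))]; norm_num
  -- projections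
  have hproj : ∀ (a : Fin (ρ + 1) → ℂ) (j : Fin (ρ + 1)),
      E (idx j) *ᵥ (fun v => (∑ m, a m • uc m) (cl v)) = a j • fun v => uc j (cl v) :=
    fun a j => proj_idx A θ hθinj E hAE hEsum U cl hstep idx hidxinj uc hUuc a j
  have hEt : E (idx 1) *ᵥ x = cc 1 • fun v => uc 1 (cl v) := by
    rw [hxΦ]; exact hproj cc 1
  -- entrywise products in coordinates
  have hlamC : ∀ i, uc 1 i * uc 1 i = ∑ m, (lam m : ℂ) * uc m i := by
    intro i
    have h5 := congrFun hlam i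
    simp only [Pi.mul_apply, Finset.sum_apply, Pi.smul_apply, smul_eq_mul] at h5
    calc uc 1 i * uc 1 i = ((u 1 i * u 1 i : ℝ) : ℂ) := by
          simp only [hucdef]; push_cast; rfl
      _ = ((∑ m, lam m * u m i : ℝ) : ℂ) := by rw [h5]
      _ = ∑ m, (lam m : ℂ) * uc m i := by
          simp only [hucdef]; push_cast; rfl
  have htauC : ∀ i, uc 1 i * uc 1 i * uc 1 i = ∑ m, (tau m : ℂ) * uc m i := by
    intro i
    have h5 := congrFun htau i
    simp only [Pi.mul_apply, Finset.sum_apply, Pi.smul_apply, smul_eq_mul] at h5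
    calc uc 1 i * uc 1 i * uc 1 i = ((u 1 i * u 1 i * u 1 i : ℝ) : ℂ) := by
          simp only [hucdef]; push_cast; rfl
      _ = ((∑ m, tau m * u m i : ℝ) : ℂ) := by rw [h5]
      _ = ∑ m, (tau m : ℂ) * uc m i := by
          simp only [hucdef]; push_cast; rfl
  set y := (E (idx 1) *ᵥ x) * (E (idx 1) *ᵥ x) with hydef
  have hy : y = fun v => (∑ m, (cc 1 ^ 2 * (lam m : ℂ)) • uc m) (cl v) := by
    rw [hydef, hEt]
    funext v
    simp only [Pi.mul_apply, Pi.smul_apply, smul_eq_mul, Finset.sum_apply]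
    rw [show (cc 1 * uc 1 (cl v)) * (cc 1 * uc 1 (cl v)) =
      cc 1 ^ 2 * (uc 1 (cl v) * uc 1 (cl v)) by ring, hlamC (cl v), Finset.mul_sum]
    exact Finset.sum_congr rfl fun m _ => by ring
  have hy3 : y * (E (idx 1) *ᵥ x) =
      fun v => (∑ m, (cc 1 ^ 3 * (tau m : ℂ)) • uc m) (cl v) := by
    rw [hydef, hEt]
    funext v
    simp only [Pi.mul_apply, Pi.smul_apply, smul_eq_mul, Finset.sum_apply]
    rw [show (cc 1 * uc 1 (cl v)) * (cc 1 * uc 1 (cl v)) * (cc 1 * uc 1 (cl v)) =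
      cc 1 ^ 3 * (uc 1 (cl v) * uc 1 (cl v) * uc 1 (cl v)) by ring, htauC (cl v),
      Finset.mul_sum]
    exact Finset.sum_congr rfl fun m _ => by ring
  -- a base point in the code
  obtain ⟨v0, hv0C⟩ := hCne
  have hclv0 : cl v0 = 0 := by
    apply Fin.ext
    show codeDist G C v0 = (0 : Fin (ρ + 1)).val
    simp only [Fin.val_zero]
    exact (cd_zero_iff G C hC.1 hconn v0).mpr hv0C
  have hucj0 : ∀ j, uc j (cl v0) = 1 := by
    intro j
    rw [hclv0]
    simp only [hucdef]
    rw [hu0 j]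
    norm_num
  -- main argument
  intro j
  constructor
  · intro hlj hq0
    have h1 : E (idx j) *ᵥ y = 0 := by
      rw [hydef]
      exact krein_vanish E hherm hidem horth q hq (idx 1) (idx 1) (idx j) hq0 x x
    have h2 : E (idx j) *ᵥ y = (cc 1 ^ 2 * (lam j : ℂ)) • fun v => uc j (cl v) := by
      rw [hy]; exact hproj _ j
    have h3 := congrFun (h2.symm.trans h1) v0
    simp only [Pi.smul_apply, smul_eq_mul, Pi.zero_apply, hucj0 j, mul_one] at h3
    rcases mul_eq_zero.mp h3 with h | h
    · exact (pow_ne_zero 2 hcc1) h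
    · exact (Complex.ofReal_ne_zero.mpr hlj) h
  · intro htj
    by_contra hno
    push_neg at hno
    have hdec : y = ∑ s, E s *ᵥ y := by
      calc y = 1 *ᵥ y := (Matrix.one_mulVec y).symm
        _ = (∑ s, E s) *ᵥ y := by rw [hEsum]
        _ = ∑ s, E s *ᵥ y := matsum_mulVec _ _ _
    have hmul : y * (E (idx 1) *ᵥ x) = ∑ s, (E s *ᵥ y) * (E (idx 1) *ᵥ x) := by
      conv_lhs => rw [hdec]
      funext v
      simp only [Finset.sum_apply, Pi.mul_apply, Finset.sum_mul]
    have hz : E (idx j) *ᵥ (y * (E (idx 1) *ᵥ x)) = 0 := by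
      rw [hmul, vecsum_mulVec]
      apply Finset.sum_eq_zero
      intro s _
      by_cases hs : s ∈ Set.range idx
      · obtain ⟨l, rfl⟩ := hs
        by_cases hql : q (idx 1) (idx 1) (idx l) = 0
        · have h6 : E (idx l) *ᵥ y = 0 := by
            rw [hydef]
            exact krein_vanish E hherm hidem horth q hq (idx 1) (idx 1) (idx l) hql x x
          rw [h6, zero_mul, Matrix.mulVec_zero]
        · have h7 : q (idx l) (idx 1) (idx j) = 0 := hno l hql
          exact krein_vanish E hherm hidem horth q hq (idx l) (idx 1) (idx j) h7 y x
      · have h8 : E s *ᵥ y = 0 := by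
          rw [hy]
          exact proj_notin A θ hθinj E hAE hEsum U cl hstep idx uc hUuc _ s hs
        rw [h8, zero_mul, Matrix.mulVec_zero]
    have h9 : E (idx j) *ᵥ (y * (E (idx 1) *ᵥ x)) =
        (cc 1 ^ 3 * (tau j : ℂ)) • fun v => uc j (cl v) := by
      rw [hy3]; exact hproj _ j
    have h10 := congrFun (h9.symm.trans hz) v0
    simp only [Pi.smul_apply, smul_eq_mul, Pi.zero_apply, hucj0 j, mul_one] at h10
    rcases mul_eq_zero.mp h10 with h | h
    · exact (pow_ne_zero 3 hcc1) h
    · exact (Complex.ofReal_ne_zero.mpr htj) h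
end

section
/- Let Γ be a distance-regular graph. Then every Leonard completely regular code in Γ is a Q-polynomial completely regular code. -/
open Finset Matrix

variable {V : Type*}

-- basic codeDist lemmas
lemma codeDist_le (G : SimpleGraph V) (C : Finset V) {y : V} (v : V) (hy : y ∈ C) :
    codeDist G C v ≤ G.dist v y :=
  Nat.sInf_le ⟨y, hy, rfl⟩

lemma exists_codeDist (G : SimpleGraph V) {C : Finset V} (hC : C.Nonempty) (v : V) :
    ∃ y ∈ C, G.dist v y = codeDist G C v := by
  obtain ⟨y0, hy0⟩ := hC
  exact Nat.sInf_mem (⟨G.dist v y0, y0, hy0, rfl⟩ : {n | ∃ y ∈ C, G.dist v y = n}.Nonempty)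

lemma codeDist_eq_zero_iff (G : SimpleGraph V) (hG : G.Connected) {C : Finset V}
    (hC : C.Nonempty) (v : V) : codeDist G C v = 0 ↔ v ∈ C := by
  constructor
  · intro h
    obtain ⟨y, hy, hd⟩ := exists_codeDist G hC v
    rw [h] at hd
    rwa [(hG.dist_eq_zero_iff).mp hd]
  · intro h
    have := codeDist_le G C v h
    simpa [SimpleGraph.dist_self] using this

lemma codeDist_adj_le (G : SimpleGraph V) (hG : G.Connected) {C : Finset V}
    (hC : C.Nonempty) {v z : V} (h : G.Adj v z) :
    codeDist G C z ≤ codeDist G C v + 1 := by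
  obtain ⟨y, hy, hd⟩ := exists_codeDist G hC v
  have h1 : G.dist z y ≤ G.dist z v + G.dist v y := hG.dist_triangle
  have h2 : G.dist z v = 1 := SimpleGraph.dist_eq_one_iff_adj.mpr h.symm
  have h3 := codeDist_le G C z hy
  omega

-- equitable partition identity
lemma cell_step [Fintype V] [DecidableEq V] (G : SimpleGraph V) [DecidableRel G.Adj]
    (hconn : G.Connected) {C : Finset V} {ρ : ℕ} {γ α β : ℕ → ℕ}
    (hne : C.Nonempty) (hcov : ∀ v, codeDist G C v ≤ ρ)
    (hγ : ∀ i, 1 ≤ i → i ≤ ρ → ∀ v, codeDist G C v = i → nbrsInCell G C (i - 1) v = γ i)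
    (hα : ∀ i ≤ ρ, ∀ v, codeDist G C v = i → nbrsInCell G C i v = α i)
    (hβ : ∀ i ≤ ρ, ∀ v, codeDist G C v = i → nbrsInCell G C (i + 1) v = β i)
    (j : Fin (ρ + 1)) :
    (G.adjMatrix ℂ) *ᵥ cellVec G C (j : ℕ) =
      ∑ i : Fin (ρ + 1), quotientMatrix ℂ γ α β ρ i j • cellVec G C (i : ℕ) := by
  funext v
  have hdv : codeDist G C v ≤ ρ := hcov v
  set dv := codeDist G C v with hdvdef
  have hR : (∑ i : Fin (ρ + 1), quotientMatrix ℂ γ α β ρ i j • cellVec G C (i : ℕ)) v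
      = quotientMatrix ℂ γ α β ρ ⟨dv, by omega⟩ j := by
    rw [Finset.sum_apply]
    rw [Finset.sum_eq_single (⟨dv, by omega⟩ : Fin (ρ + 1))]
    · simp [cellVec, ← hdvdef]
    · intro i _ hne'
      have : dv ≠ (i : ℕ) := by
        intro hh
        exact hne' (Fin.ext hh.symm)
      simp [cellVec, ← hdvdef, this]
    · intro h; exact absurd (Finset.mem_univ _) h
  have hL : ((G.adjMatrix ℂ) *ᵥ cellVec G C (j : ℕ)) v = (nbrsInCell G C (j : ℕ) v : ℂ) := by
    rw [SimpleGraph.adjMatrix_mulVec_apply]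
    unfold cellVec nbrsInCell
    rw [Finset.sum_boole]
    congr 1
    congr 1
    ext z
    simp [SimpleGraph.mem_neighborFinset]
  rw [hL, hR]
  -- case analysis
  have key : nbrsInCell G C (j : ℕ) v = quotientMatrix ℕ γ α β ρ ⟨dv, by omega⟩ j := by
    rcases Nat.lt_trichotomy dv (j : ℕ) with hlt | heq | hgt
    · rcases Nat.lt_or_ge (dv + 1) (j : ℕ) with h2 | h2
      · -- far below: zero
        have : nbrsInCell G C (j : ℕ) v = 0 := by
          unfold nbrsInCell
          rw [Finset.card_eq_zero, Finset.filter_eq_empty_iff]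
          rintro z - ⟨hadj, hz⟩
          have := codeDist_adj_le G hconn hne hadj
          omega
        rw [this, quotientMatrix]
        simp only [Matrix.of_apply]
        have h1 : ¬ (dv = (j : ℕ) + 1) := by omega
        have h2' : ¬ (dv = (j : ℕ)) := by omega
        have h3 : ¬ ((j : ℕ) = dv + 1) := by omega
        simp [h1, h2', h3]
      · -- j = dv + 1 : beta
        have hj : (j : ℕ) = dv + 1 := by omega
        rw [hj]
        have := hβ dv (by omega) v rfl
        rw [this, quotientMatrix]
        simp only [Matrix.of_apply]
        have h1 : ¬ (dv = dv + 1 + 1) := by omega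
        have h2' : ¬ (dv = dv + 1) := by omega
        simp [hj, h1, h2']
    · -- equal : alpha
      rw [← heq]
      have := hα dv (by omega) v rfl
      rw [this, quotientMatrix]
      simp only [Matrix.of_apply]
      have h1 : ¬ (dv = dv + 1) := by omega
      simp [← heq, h1]
    · rcases Nat.lt_or_ge ((j : ℕ) + 1) dv with h2 | h2
      · -- far above : zero
        have : nbrsInCell G C (j : ℕ) v = 0 := by
          unfold nbrsInCell
          rw [Finset.card_eq_zero, Finset.filter_eq_empty_iff]
          rintro z - ⟨hadj, hz⟩
          have := codeDist_adj_le G hconn hne hadj.symm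
          omega
        rw [this, quotientMatrix]
        simp only [Matrix.of_apply]
        have h1 : ¬ (dv = (j : ℕ) + 1) := by omega
        have h2' : ¬ (dv = (j : ℕ)) := by omega
        have h3 : ¬ ((j : ℕ) = dv + 1) := by omega
        simp [h1, h2', h3]
      · -- dv = j + 1 : gamma
        have hj : dv = (j : ℕ) + 1 := by omega
        have hj' : (j : ℕ) = dv - 1 := by omega
        rw [hj']
        have := hγ dv (by omega) (by omega) v rfl
        rw [this, quotientMatrix]
        simp only [Matrix.of_apply]
        rw [if_pos hj]
        simp
  rw [key]
  simp only [quotientMatrix, Matrix.of_apply]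
  split_ifs <;> simp

-- polynomial / eigenvector lemmas
lemma pow_mulVec_eig [Fintype V] [DecidableEq V] {A : Matrix V V ℂ} {μ : ℂ} {w : V → ℂ}
    (h : A *ᵥ w = μ • w) : ∀ m : ℕ, (A ^ m) *ᵥ w = (μ ^ m) • w := by
  intro m
  induction m with
  | zero => simp [Matrix.one_mulVec]
  | succ m ih =>
      rw [pow_succ, ← Matrix.mulVec_mulVec, h, Matrix.mulVec_smul, ih, pow_succ, smul_smul,
        mul_comm]

lemma aeval_mulVec_eig_s14 [Fintype V] [DecidableEq V] {A : Matrix V V ℂ} {μ : ℂ} {w : V → ℂ}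
    (h : A *ᵥ w = μ • w) (p : Polynomial ℂ) :
    (Polynomial.aeval A p) *ᵥ w = (p.eval μ) • w := by
  induction p using Polynomial.induction_on' with
  | add p q hp hq => rw [map_add, Matrix.add_mulVec, hp, hq, Polynomial.eval_add, add_smul]
  | monomial m a =>
      rw [Polynomial.aeval_monomial, ← Matrix.mulVec_mulVec, pow_mulVec_eig h,
        Polynomial.eval_monomial]
      rw [Algebra.algebraMap_eq_smul_one, Matrix.mulVec_smul, Matrix.smul_mulVec,
        Matrix.one_mulVec, smul_smul]
      rw [mul_comm]


lemma pow_mulVec_mem [Fintype V] [DecidableEq V] {A : Matrix V V ℂ}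
    {W : Submodule ℂ (V → ℂ)} (hW : ∀ w ∈ W, A *ᵥ w ∈ W) {w : V → ℂ} (hw : w ∈ W) :
    ∀ m : ℕ, (A ^ m) *ᵥ w ∈ W := by
  intro m
  induction m with
  | zero => simpa [Matrix.one_mulVec] using hw
  | succ m ih =>
      rw [pow_succ', ← Matrix.mulVec_mulVec]
      exact hW _ ih

lemma aeval_mulVec_mem [Fintype V] [DecidableEq V] {A : Matrix V V ℂ}
    {W : Submodule ℂ (V → ℂ)} (hW : ∀ w ∈ W, A *ᵥ w ∈ W) {w : V → ℂ} (hw : w ∈ W)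
    (p : Polynomial ℂ) : (Polynomial.aeval A p) *ᵥ w ∈ W := by
  induction p using Polynomial.induction_on' with
  | add p q hp hq => rw [map_add, Matrix.add_mulVec]; exact W.add_mem hp hq
  | monomial m a =>
      rw [Polynomial.aeval_monomial, Algebra.algebraMap_eq_smul_one,
        Matrix.smul_mul, Matrix.one_mul, Matrix.smul_mulVec]
      exact W.smul_mem _ (pow_mulVec_mem hW hw m)

lemma sum_mulVec' [Fintype V] {ι : Type*} (s : Finset ι) (f : ι → Matrix V V ℂ)
    (x : V → ℂ) : (∑ j ∈ s, f j) *ᵥ x = ∑ j ∈ s, f j *ᵥ x := by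
  classical
  induction s using Finset.induction_on with
  | empty => simp [Matrix.zero_mulVec]
  | insert _ _ h ih => rw [Finset.sum_insert h, Finset.sum_insert h, Matrix.add_mulVec, ih]

theorem stmt14 {V : Type*} [Fintype V] [DecidableEq V]
    (G : SimpleGraph V) [DecidableRel G.Adj] (k D : ℕ) (b c : ℕ → ℕ)
    (hG : IsDRG G k D b c)
    (θ : Fin (D + 1) → ℝ) (hθ0 : θ 0 = k)
    (E : Fin (D + 1) → Matrix V V ℂ) (hPI : PrimIdem (G.adjMatrix ℂ) D θ E)
    (C : Finset V) (ρ : ℕ) (γ α β : ℕ → ℕ)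
    (hC : IsCRC G C ρ γ α β)
    (hL : IsLeonard D ρ E C) :
    IsQPolyCode G D ρ θ E γ α β C := by

  obtain ⟨t, ht0, hu0, σ, hσinj, hσrange, M, hMtri, hMrel⟩ := hL
  obtain ⟨hconn, hdeg, -, -, -⟩ := hG
  obtain ⟨hCne, hcov, -, hγ, hα, hβ⟩ := hC
  obtain ⟨hθinj, hEE, hEH, hAE, hEsum, hEnz⟩ := hPI
  -- abbreviations
  set cellf : Fin (ρ + 1) → V → ℂ := fun i => cellVec G C (i : ℕ) with hcellf
  set vf : Fin (ρ + 1) → V → ℂ := fun l => E (σ l) *ᵥ charVec C with hvf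
  set U : Matrix (Fin (ρ + 1)) (Fin (ρ + 1)) ℂ := quotientMatrix ℂ γ α β ρ with hUdef
  set W : Submodule ℂ (V → ℂ) := Submodule.span ℂ (Set.range cellf) with hWdef
  -- basic facts
  have hstep : ∀ j : Fin (ρ + 1), G.adjMatrix ℂ *ᵥ cellf j = ∑ i, U i j • cellf i :=
    fun j => cell_step G hconn hCne hcov hγ hα hβ j
  have hAW : ∀ w ∈ W, G.adjMatrix ℂ *ᵥ w ∈ W := by
    intro w hw
    induction hw using Submodule.span_induction with
    | mem y hy =>
        obtain ⟨i, rfl⟩ := hy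
        rw [hstep i]
        exact Submodule.sum_mem _ fun l _ =>
          Submodule.smul_mem _ _ (Submodule.subset_span ⟨l, rfl⟩)
    | zero => rw [Matrix.mulVec_zero]; exact Submodule.zero_mem _
    | add y z _ _ hy hz => rw [Matrix.mulVec_add]; exact Submodule.add_mem _ hy hz
    | smul a y _ hy => rw [Matrix.mulVec_smul]; exact Submodule.smul_mem _ _ hy
  have heig : ∀ j : Fin (D + 1),
      G.adjMatrix ℂ *ᵥ (E j *ᵥ charVec C) = ((θ j : ℝ) : ℂ) • (E j *ᵥ charVec C) := by
    intro j
    rw [Matrix.mulVec_mulVec, hAE j, Matrix.smul_mulVec]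
  have hxdec : charVec C = ∑ j : Fin (D + 1), E j *ᵥ charVec C := by
    conv_lhs => rw [← Matrix.one_mulVec (charVec C), ← hEsum]
    rw [sum_mulVec']
  have hx0 : charVec C = cellf 0 := by
    funext v
    simp only [hcellf, charVec, cellVec, Fin.val_zero]
    by_cases hv : v ∈ C
    · simp [hv, codeDist_eq_zero_iff G hconn hCne v]
    · simp [hv, codeDist_eq_zero_iff G hconn hCne v]
  have hxW : charVec C ∈ W := hx0 ▸ Submodule.subset_span ⟨0, rfl⟩
  have hθCinj : Function.Injective (fun j : Fin (D + 1) => ((θ j : ℝ) : ℂ)) :=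
    fun a b h => hθinj (Complex.ofReal_injective h)
  have hEjW : ∀ j : Fin (D + 1), E j *ᵥ charVec C ∈ W := by
    intro j
    set p : Polynomial ℂ :=
      ∏ i ∈ Finset.univ.erase j, (Polynomial.X - Polynomial.C ((θ i : ℝ) : ℂ)) with hp
    have heval : ∀ l : Fin (D + 1), p.eval ((θ l : ℝ) : ℂ)
        = ∏ i ∈ Finset.univ.erase j, (((θ l : ℝ) : ℂ) - ((θ i : ℝ) : ℂ)) := by
      intro l
      simp [hp, Polynomial.eval_prod]
    have h1 : (Polynomial.aeval (G.adjMatrix ℂ) p) *ᵥ charVec C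
        = ∑ l : Fin (D + 1), (p.eval ((θ l : ℝ) : ℂ)) • (E l *ᵥ charVec C) := by
      conv_lhs => rw [hxdec]
      have h0 := map_sum (Matrix.mulVecLin (Polynomial.aeval (G.adjMatrix ℂ) p))
        (fun l => E l *ᵥ charVec C) Finset.univ
      simp only [Matrix.mulVecLin_apply] at h0
      rw [h0]
      exact Finset.sum_congr rfl fun l _ => aeval_mulVec_eig_s14 (heig l) p
    have h2 : (Polynomial.aeval (G.adjMatrix ℂ) p) *ᵥ charVec C
        = (p.eval ((θ j : ℝ) : ℂ)) • (E j *ᵥ charVec C) := by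
      rw [h1, Finset.sum_eq_single j]
      · intro l _ hl
        have hz : (∏ i ∈ Finset.univ.erase j, (((θ l : ℝ) : ℂ) - ((θ i : ℝ) : ℂ))) = 0 :=
          Finset.prod_eq_zero (Finset.mem_erase.mpr ⟨hl, Finset.mem_univ l⟩) (sub_self _)
        rw [heval l, hz, zero_smul]
      · intro h; exact absurd (Finset.mem_univ _) h
    have hcne0 : p.eval ((θ j : ℝ) : ℂ) ≠ 0 := by
      rw [heval]
      refine Finset.prod_ne_zero_iff.mpr fun i hi => ?_
      have hij : i ≠ j := (Finset.mem_erase.mp hi).1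
      exact sub_ne_zero.mpr fun hh => hij (hθCinj hh).symm
    have h3 := aeval_mulVec_mem hAW hxW p
    rw [h2] at h3
    have h4 := W.smul_mem (p.eval ((θ j : ℝ) : ℂ))⁻¹ h3
    rwa [smul_smul, inv_mul_cancel₀ hcne0, one_smul] at h4
  have hvnz : ∀ l, vf l ≠ 0 := fun l => (hσrange (σ l)).mpr ⟨l, rfl⟩
  have hind : LinearIndependent ℂ vf :=
    Module.End.eigenvectors_linearIndependent' (Matrix.mulVecLin (G.adjMatrix ℂ))
      (fun l => ((θ (σ l) : ℝ) : ℂ)) (fun a b h => hσinj (hθCinj h)) vf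
      (fun l => ⟨Module.End.mem_eigenspace_iff.mpr
        (by rw [Matrix.mulVecLin_apply]; exact heig (σ l)), hvnz l⟩)
  have hspanle : Submodule.span ℂ (Set.range vf) ≤ W :=
    Submodule.span_le.mpr (by rintro y ⟨l, rfl⟩; exact hEjW (σ l))
  have hfr1 : Module.finrank ℂ (Submodule.span ℂ (Set.range vf)) = ρ + 1 := by
    rw [finrank_span_eq_card hind, Fintype.card_fin]
  have hfr2 : Module.finrank ℂ W ≤ ρ + 1 := by
    refine (finrank_span_le_card _).trans ?_
    rw [Set.toFinset_card]
    exact (Fintype.card_range_le cellf).trans (le_of_eq (Fintype.card_fin _))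
  have hWeq : Submodule.span ℂ (Set.range vf) = W :=
    Submodule.eq_of_le_of_finrank_le hspanle (by rw [hfr1]; exact hfr2)
  have hcellind : LinearIndependent ℂ cellf := by
    rw [linearIndependent_iff_card_eq_finrank_span, Fintype.card_fin, Set.finrank,
      ← hWdef, ← hWeq, hfr1]
  have hPhi : ∀ w : Fin (ρ + 1) → ℂ,
      G.adjMatrix ℂ *ᵥ (∑ i, w i • cellf i) = ∑ i, (U *ᵥ w) i • cellf i := by
    intro w
    have h0 := map_sum (Matrix.mulVecLin (G.adjMatrix ℂ)) (fun i => w i • cellf i) Finset.univ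
    simp only [LinearMap.map_smul, Matrix.mulVecLin_apply] at h0
    rw [h0]
    calc ∑ i, w i • (G.adjMatrix ℂ *ᵥ cellf i)
        = ∑ i, ∑ l, (U l i * w i) • cellf l := by
          refine Finset.sum_congr rfl fun i _ => ?_
          rw [hstep i, Finset.smul_sum]
          exact Finset.sum_congr rfl fun l _ => by rw [smul_smul, mul_comm]
      _ = ∑ l, (∑ i, U l i * w i) • cellf l := by
          rw [Finset.sum_comm]
          exact Finset.sum_congr rfl fun l _ => by rw [Finset.sum_smul]
      _ = ∑ l, (U *ᵥ w) l • cellf l := rfl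
  have hcell1 : (fun _ : V => (1 : ℂ)) = ∑ i : Fin (ρ + 1), cellf i := by
    funext v
    rw [Finset.sum_apply]
    have hdv : codeDist G C v ≤ ρ := hcov v
    rw [Finset.sum_eq_single (⟨codeDist G C v, by omega⟩ : Fin (ρ + 1))]
    · simp [hcellf, cellVec]
    · intro i _ hne'
      have : codeDist G C v ≠ (i : ℕ) := fun hh => hne' (Fin.ext hh.symm)
      simp [hcellf, cellVec, this]
    · intro h; exact absurd (Finset.mem_univ _) h
  have hspec : ∀ lam : ℂ, lam ∈ spectrum ℂ U ↔ ∃ w, w ≠ 0 ∧ U *ᵥ w = lam • w := by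
    intro lam
    have halg : ∀ w : Fin (ρ + 1) → ℂ,
        (algebraMap ℂ (Matrix (Fin (ρ + 1)) (Fin (ρ + 1)) ℂ) lam - U) *ᵥ w
          = lam • w - U *ᵥ w := by
      intro w
      rw [Matrix.sub_mulVec, Algebra.algebraMap_eq_smul_one, Matrix.smul_mulVec,
        Matrix.one_mulVec]
    rw [spectrum.mem_iff, Matrix.isUnit_iff_isUnit_det, isUnit_iff_ne_zero, not_not,
      ← Matrix.exists_mulVec_eq_zero_iff]
    constructor
    · rintro ⟨w, hw, hmul⟩
      rw [halg w] at hmul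
      exact ⟨w, hw, (sub_eq_zero.mp hmul).symm⟩
    · rintro ⟨w, hw, hmul⟩
      refine ⟨w, hw, ?_⟩
      rw [halg w, hmul, sub_self]
  have hA1 : G.adjMatrix ℂ *ᵥ (fun _ : V => (1 : ℂ))
      = ((θ 0 : ℝ) : ℂ) • (fun _ : V => (1 : ℂ)) := by
    funext v
    rw [SimpleGraph.adjMatrix_mulVec_apply]
    simp only [Finset.sum_const, nsmul_eq_mul, mul_one, Pi.smul_apply, smul_eq_mul, mul_one]
    rw [SimpleGraph.card_neighborFinset_eq_degree, hdeg v, hθ0]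
    push_cast
    ring
  have honeW : (fun _ : V => (1 : ℂ)) ∈ Submodule.span ℂ (Set.range vf) := by
    rw [hWeq, hWdef, hcell1]
    exact Submodule.sum_mem _ fun i _ => Submodule.subset_span ⟨i, rfl⟩
  obtain ⟨cc, hcc⟩ := (Submodule.mem_span_range_iff_exists_fun ℂ).mp honeW
  have hkey : ∀ (lam : ℂ) (d : Fin (ρ + 1) → ℂ) (y : V → ℂ),
      (∑ l, d l • vf l = y) → (G.adjMatrix ℂ *ᵥ y = lam • y) →
      ∀ l, d l * (((θ (σ l) : ℝ) : ℂ) - lam) = 0 := by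
    intro lam d y hsum hAy
    have h1 : G.adjMatrix ℂ *ᵥ (∑ l, d l • vf l) = ∑ l, (d l * ((θ (σ l) : ℝ) : ℂ)) • vf l := by
      have h0 := map_sum (Matrix.mulVecLin (G.adjMatrix ℂ)) (fun l => d l • vf l) Finset.univ
      simp only [LinearMap.map_smul, Matrix.mulVecLin_apply] at h0
      rw [h0]
      refine Finset.sum_congr rfl fun l _ => ?_
      simp only [hvf]
      rw [heig (σ l), smul_smul]
    have h2 : ∑ l, (d l * ((θ (σ l) : ℝ) : ℂ)) • vf l = ∑ l, (d l * lam) • vf l := by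
      rw [← h1, hsum, hAy, ← hsum, Finset.smul_sum]
      refine Finset.sum_congr rfl fun l _ => ?_
      rw [smul_smul, mul_comm]
    have h3 : ∑ l, (d l * ((θ (σ l) : ℝ) : ℂ) - d l * lam) • vf l = 0 := by
      simp only [sub_smul]
      rw [Finset.sum_sub_distrib, h2, sub_self]
    intro l
    have := Fintype.linearIndependent_iff.mp hind _ h3 l
    rw [mul_sub]
    exact this
  have hccz : ∀ l, cc l * (((θ (σ l) : ℝ) : ℂ) - ((θ 0 : ℝ) : ℂ)) = 0 :=
    hkey _ cc _ hcc hA1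
  have hVne : Nonempty V := ⟨hCne.choose⟩
  have hccne : ∃ m, cc m ≠ 0 := by
    by_contra h
    push_neg at h
    have h1 : (fun _ : V => (1 : ℂ)) = 0 := by
      rw [← hcc]
      refine Finset.sum_eq_zero fun l _ => by rw [h l, zero_smul]
    exact one_ne_zero (congrFun h1 hVne.some)
  obtain ⟨m, hm⟩ := hccne
  have hσval : ∀ l, cc l ≠ 0 → σ l = 0 := by
    intro l hl
    rcases mul_eq_zero.mp (hccz l) with h | h
    · exact absurd h hl
    · exact hθinj (by exact_mod_cast sub_eq_zero.mp h)
  have hσm : σ m = 0 := hσval m hm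
  have hcczero : ∀ l, l ≠ m → cc l = 0 := by
    intro l hl
    by_contra h
    exact hl (hσinj ((hσval l h).trans hσm.symm))
  have hone_eq : (fun _ : V => (1 : ℂ)) = cc m • vf m := by
    rw [← hcc, Finset.sum_eq_single m]
    · intro l _ hl; rw [hcczero l hl, zero_smul]
    · intro h; exact absurd (Finset.mem_univ _) h
  have hvfm : vf m = (cc m)⁻¹ • (fun _ : V => (1 : ℂ)) := by
    rw [hone_eq, smul_smul, inv_mul_cancel₀ hm, one_smul]
  obtain ⟨t', ht'⟩ := (hσrange t).mp hu0
  have ht'm : t' ≠ m := fun h => ht0 (by rw [← ht', h, hσm])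
  have hρ1 : 1 ≤ ρ := by
    by_contra h
    have hρ0 : ρ = 0 := by omega
    subst hρ0
    exact ht'm (Subsingleton.elim (α := Fin 1) t' m)
  have hval1 : ((1 : Fin (ρ + 1)) : ℕ) = 1 := by
    rw [Fin.val_one']
    exact Nat.mod_eq_of_lt (by omega)
  have hcolm : ∀ l, M l m = if l = t' then (cc m)⁻¹ else 0 := by
    have h1 : E t *ᵥ charVec C * (E (σ m) *ᵥ charVec C)
        = ∑ l, M l m • (E (σ l) *ᵥ charVec C) := hMrel m
    have h2 : E t *ᵥ charVec C * (E (σ m) *ᵥ charVec C)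
        = (cc m)⁻¹ • (E t *ᵥ charVec C) := by
      have hvm : E (σ m) *ᵥ charVec C = (cc m)⁻¹ • (fun _ : V => (1 : ℂ)) := hvfm
      rw [hvm]
      funext v
      simp only [Pi.mul_apply, Pi.smul_apply, smul_eq_mul]
      ring
    have h3 : ∑ l, (M l m - if l = t' then (cc m)⁻¹ else 0) • vf l = 0 := by
      simp only [sub_smul, ite_smul, zero_smul]
      rw [Finset.sum_sub_distrib]
      have h4 : ∑ l, (if l = t' then (cc m)⁻¹ • vf l else 0) = (cc m)⁻¹ • vf t' := by
        rw [Finset.sum_ite_eq' Finset.univ t' (fun l => (cc m)⁻¹ • vf l),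
          if_pos (Finset.mem_univ t')]
      rw [h4]
      have h5 : ∑ l, M l m • vf l = (cc m)⁻¹ • vf t' := by
        rw [← h1, h2]
        simp only [hvf]
        rw [ht']
      rw [h5, sub_self]
    intro l
    have := Fintype.linearIndependent_iff.mp hind _ h3 l
    exact sub_eq_zero.mp this
  have hmend : (m : ℕ) = 0 ∨ (m : ℕ) = ρ := by
    by_contra h
    push_neg at h
    obtain ⟨h0, hρ'⟩ := h
    have hmlt : (m : ℕ) < ρ := lt_of_le_of_ne (by omega) hρ'
    have hm0 : 0 < (m : ℕ) := Nat.pos_of_ne_zero h0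
    have h1 : M ⟨(m : ℕ) - 1, by omega⟩ m ≠ 0 := hMtri.2 _ m (by simp only []; omega)
    have h2 : M ⟨(m : ℕ) + 1, by omega⟩ m ≠ 0 := hMtri.2 _ m (by simp only []; omega)
    have e1 : (⟨(m : ℕ) - 1, by omega⟩ : Fin (ρ + 1)) = t' := by
      by_contra hh
      exact h1 (by rw [hcolm _, if_neg hh])
    have e2 : (⟨(m : ℕ) + 1, by omega⟩ : Fin (ρ + 1)) = t' := by
      by_contra hh
      exact h2 (by rw [hcolm _, if_neg hh])
    have := e1.trans e2.symm
    rw [Fin.mk.injEq] at this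
    omega
  obtain ⟨σ', M', hσ'inj, hrange', hσ'0, hσ'1, hM'z, hrel'⟩ :
      ∃ (σ' : Fin (ρ + 1) → Fin (D + 1)) (M' : Matrix (Fin (ρ + 1)) (Fin (ρ + 1)) ℂ),
        Function.Injective σ' ∧ Set.range σ' = Set.range σ ∧ σ' 0 = 0 ∧ σ' 1 = t ∧
        (∀ l j : Fin (ρ + 1), 1 < (((l : ℕ) : ℤ) - ((j : ℕ) : ℤ)).natAbs → M' l j = 0) ∧
        (∀ j, (E t *ᵥ charVec C) * (E (σ' j) *ᵥ charVec C)
            = ∑ l, M' l j • (E (σ' l) *ᵥ charVec C)) := by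
    rcases hmend with hm0 | hmρ
    · -- m is the first index
      have hm0' : m = 0 := Fin.ext hm0
      have ht'1 : t' = 1 := by
        by_contra hh
        have h1 : M 1 m ≠ 0 := hMtri.2 1 m (by rw [hval1, hm0]; omega)
        exact h1 (by rw [hcolm 1, if_neg (fun h => hh h.symm)])
      exact ⟨σ, M, hσinj, rfl, hm0' ▸ hσm, ht'1 ▸ ht', hMtri.1, hMrel⟩
    · -- m is the last index; reverse the ordering
      have hmlast : m = Fin.last ρ := by
        apply Fin.ext
        rw [Fin.val_last, hmρ]
      have hrev1 : ((Fin.rev (1 : Fin (ρ + 1))) : ℕ) = ρ - 1 := by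
        rw [Fin.val_rev, hval1]
        omega
      have ht'ρ : t' = Fin.rev 1 := by
        by_contra hh
        have h1 : M (Fin.rev 1) m ≠ 0 := hMtri.2 _ m (by rw [hrev1, hmρ]; omega)
        exact h1 (by rw [hcolm _, if_neg (fun h => hh h.symm)])
      refine ⟨fun j => σ j.rev, Matrix.of (fun l j => M l.rev j.rev),
        fun a b h => Fin.rev_injective (hσinj h), ?_, ?_, ?_, ?_, ?_⟩
      · ext z
        simp only [Set.mem_range]
        constructor
        · rintro ⟨j, rfl⟩; exact ⟨j.rev, rfl⟩
        · rintro ⟨j, rfl⟩; exact ⟨j.rev, by rw [Fin.rev_rev]⟩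
      · show σ (Fin.rev 0) = 0
        rw [Fin.rev_zero, ← hmlast, hσm]
      · show σ (Fin.rev 1) = t
        rw [← ht'ρ, ht']
      · intro l j h
        have hl := Fin.val_rev l
        have hj := Fin.val_rev j
        have hlρ : (l : ℕ) ≤ ρ := by omega
        have hjρ : (j : ℕ) ≤ ρ := by omega
        refine hMtri.1 l.rev j.rev ?_
        rw [hl, hj] at *
        omega
      · intro j
        show E t *ᵥ charVec C * (E (σ j.rev) *ᵥ charVec C) = _
        rw [hMrel j.rev]
        refine Fintype.sum_equiv Fin.revPerm _ _ fun l => ?_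
        simp only [Fin.revPerm_apply, Matrix.of_apply, Fin.rev_rev]
  refine ⟨t, σ', hσ'0, hσ'inj, hσ'1, ?_, ?_⟩
  · -- spectrum
    have hrangeθ : (Set.range fun j => ((θ (σ' j) : ℝ) : ℂ))
        = Set.range fun l => ((θ (σ l) : ℝ) : ℂ) := by
      ext z
      simp only [Set.mem_range]
      constructor
      · rintro ⟨j, rfl⟩
        obtain ⟨l, hl⟩ : σ' j ∈ Set.range σ := by rw [← hrange']; exact ⟨j, rfl⟩
        exact ⟨l, by rw [hl]⟩
      · rintro ⟨l, rfl⟩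
        obtain ⟨j, hj⟩ : σ l ∈ Set.range σ' := by rw [hrange']; exact ⟨l, rfl⟩
        exact ⟨j, by rw [hj]⟩
    rw [hrangeθ]
    ext lam
    rw [hspec lam]
    simp only [Set.mem_range]
    constructor
    · rintro ⟨w, hw, hUw⟩
      have hy : G.adjMatrix ℂ *ᵥ (∑ i, w i • cellf i) = lam • (∑ i, w i • cellf i) := by
        rw [hPhi w, hUw, Finset.smul_sum]
        exact Finset.sum_congr rfl fun i _ => by
          rw [Pi.smul_apply, smul_eq_mul, ← smul_smul]
      have hyW : (∑ i, w i • cellf i) ∈ Submodule.span ℂ (Set.range vf) := by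
        rw [hWeq]
        exact Submodule.sum_mem _ fun i _ =>
          Submodule.smul_mem _ _ (Submodule.subset_span ⟨i, rfl⟩)
      obtain ⟨d, hd⟩ := (Submodule.mem_span_range_iff_exists_fun ℂ).mp hyW
      have hyne : (∑ i, w i • cellf i) ≠ 0 := by
        intro hh
        apply hw
        funext i
        exact Fintype.linearIndependent_iff.mp hcellind w hh i
      have hdz := hkey lam d _ hd hy
      have hdne : ∃ l, d l ≠ 0 := by
        by_contra h
        push_neg at h
        apply hyne
        rw [← hd]
        exact Finset.sum_eq_zero fun l _ => by rw [h l, zero_smul]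
      obtain ⟨l, hl⟩ := hdne
      rcases mul_eq_zero.mp (hdz l) with h | h
      · exact absurd h hl
      · exact ⟨l, sub_eq_zero.mp h⟩
    · rintro ⟨l, hl⟩
      have h1 : vf l ∈ W := hEjW (σ l)
      rw [hWdef] at h1
      obtain ⟨w, hw⟩ := (Submodule.mem_span_range_iff_exists_fun ℂ).mp h1
      refine ⟨w, ?_, ?_⟩
      · intro hh
        apply hvnz l
        rw [← hw, hh]
        exact Finset.sum_eq_zero fun i _ => by rw [Pi.zero_apply, zero_smul]
      · have h3 : G.adjMatrix ℂ *ᵥ vf l = lam • vf l := by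
          simp only [hvf]
          rw [heig (σ l), hl]
        have h2 : ∑ i, (U *ᵥ w) i • cellf i = ∑ i, (lam • w) i • cellf i := by
          rw [← hPhi w, hw, h3, ← hw, Finset.smul_sum]
          exact Finset.sum_congr rfl fun i _ => by
            rw [smul_smul, Pi.smul_apply, smul_eq_mul]
        funext i
        have h4 := Fintype.linearIndependent_iff.mp hcellind
          (fun i => (U *ᵥ w) i - (lam • w) i) (by
            simp only [sub_smul]
            rw [Finset.sum_sub_distrib, h2, sub_self])
        exact sub_eq_zero.mp (h4 i)
  · -- powers
    have hmemeig : ∀ l : Fin (ρ + 1), (E (σ' l) *ᵥ charVec C) ∈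
        Module.End.eigenspace (Matrix.mulVecLin (G.adjMatrix ℂ)) ((θ (σ' l) : ℝ) : ℂ) :=
      fun l => Module.End.mem_eigenspace_iff.mpr
        (by rw [Matrix.mulVecLin_apply]; exact heig (σ' l))
    have hup : ∀ q : ℕ, 1 ≤ q → ∃ cq : Fin (ρ + 1) → ℂ,
        (∀ l : Fin (ρ + 1), q < (l : ℕ) → cq l = 0) ∧
        (fun v => (E t *ᵥ charVec C) v ^ q) = ∑ l, cq l • (E (σ' l) *ᵥ charVec C) := by
      intro q hq1
      induction q with
      | zero => omega
      | succ q ih =>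
        rcases Nat.eq_zero_or_pos q with hq0 | hqpos
        · subst hq0
          refine ⟨fun l => if l = 1 then 1 else 0, ?_, ?_⟩
          · intro l hl
            show (if l = 1 then (1 : ℂ) else 0) = 0
            rw [if_neg]
            intro hh
            rw [hh, hval1] at hl
            omega
          · simp only [ite_smul, one_smul, zero_smul]
            rw [Finset.sum_ite_eq' Finset.univ (1 : Fin (ρ + 1)) _,
              if_pos (Finset.mem_univ _), hσ'1]
            funext v
            rw [pow_one]
        · obtain ⟨cq, hz, hsum⟩ := ih hqpos
          refine ⟨fun l => ∑ j, M' l j * cq j, ?_, ?_⟩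
          · intro l hl
            refine Finset.sum_eq_zero fun j _ => ?_
            rcases Nat.lt_or_ge q (j : ℕ) with hj | hj
            · rw [hz j hj, mul_zero]
            · rw [hM'z l j (by omega), zero_mul]
          · have hmul : (fun v => (E t *ᵥ charVec C) v ^ (q + 1))
                = (E t *ᵥ charVec C) * (fun v => (E t *ᵥ charVec C) v ^ q) :=
              funext fun v => by rw [Pi.mul_apply, pow_succ']
            rw [hmul, hsum, Finset.mul_sum]
            have hterm : ∀ j, (E t *ᵥ charVec C) * (cq j • (E (σ' j) *ᵥ charVec C))
                = cq j • ((E t *ᵥ charVec C) * (E (σ' j) *ᵥ charVec C)) :=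
              fun j => funext fun v => by
                simp only [Pi.mul_apply, Pi.smul_apply, smul_eq_mul]; ring
            calc ∑ j, (E t *ᵥ charVec C) * (cq j • (E (σ' j) *ᵥ charVec C))
                = ∑ j, ∑ l, (M' l j * cq j) • (E (σ' l) *ᵥ charVec C) := by
                  refine Finset.sum_congr rfl fun j _ => ?_
                  rw [hterm j, hrel' j, Finset.smul_sum]
                  exact Finset.sum_congr rfl fun l _ => by rw [smul_smul, mul_comm]
              _ = ∑ l, (∑ j, M' l j * cq j) • (E (σ' l) *ᵥ charVec C) := by
                  rw [Finset.sum_comm]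
                  exact Finset.sum_congr rfl fun l _ => by rw [Finset.sum_smul]
    intro p
    rcases Nat.eq_zero_or_pos (p : ℕ) with hp0 | hp1
    · have hfun : (fun v => (E t *ᵥ charVec C) v ^ (p : ℕ)) = fun _ : V => (1 : ℂ) :=
        funext fun v => by rw [hp0, pow_zero]
      rw [hfun]
      have hmem0 : (fun _ : V => (1 : ℂ)) ∈
          Module.End.eigenspace (Matrix.mulVecLin (G.adjMatrix ℂ)) ((θ (σ' 0) : ℝ) : ℂ) :=
        Module.End.mem_eigenspace_iff.mpr
          (by rw [Matrix.mulVecLin_apply, hσ'0]; exact hA1)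
      exact (le_iSup₂ (f := fun (j : Fin (ρ + 1)) (_ : j ≤ p) =>
        Module.End.eigenspace (Matrix.mulVecLin (G.adjMatrix ℂ)) ((θ (σ' j) : ℝ) : ℂ))
        0 (Fin.zero_le p)) hmem0
    · obtain ⟨cq, hz, hsum⟩ := hup (p : ℕ) hp1
      rw [hsum]
      refine Submodule.sum_mem _ fun l _ => ?_
      rcases le_or_gt (l : ℕ) (p : ℕ) with hle | hgt
      · exact (le_iSup₂ (f := fun (j : Fin (ρ + 1)) (_ : j ≤ p) =>
          Module.End.eigenspace (Matrix.mulVecLin (G.adjMatrix ℂ)) ((θ (σ' j) : ℝ) : ℂ))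
          l hle) (Submodule.smul_mem _ _ (hmemeig l))
      · rw [hz l hgt, zero_smul]
        exact Submodule.zero_mem _
end
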